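/- Assume ν̄ < ∞. In the branching Markov chain Z: (i) particles of type 0 never have any children; (ii) for any z ≥ 1 and any z₁,…,z_j ≥ 1, there exists n ≥ 0 (possibly depending on z, z₁,…,z_j) such that a particle of type z has strictly positive probability of having exactly j + n children whose types are z₁,…,z_j followed by n zeros; (iii) for every z ≥ 1, the probability that a particle of type z has at least one child of type 1 is at least (1 − ν(0))·ρ/(1+ρ)² > 0. -/

import Mathlib

open MeasureTheory ProbabilityTheory Filter
open scoped ENNReal NNReal Topology
set_option linter.unusedSectionVars false
set_option linter.unusedVariables false
set_option maxHeartbeats 1000000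

namespace TBRWPaper

/-- The mean `ν̄ = Σ_k k ν(k)` of the offspring distribution `ν`, in `ℝ≥0∞`. -/
noncomputable def nubar (ν : PMF ℕ) : ℝ≥0∞ := ∑' k : ℕ, (k : ℝ≥0∞) * ν k

variable {Ω : Type*} [MeasurableSpace Ω]

/-- Number of non-zero colors present in the urn after the addition phase of step `n`
(`ζ i` being the number of balls added at step `i`; colors are numbered consecutively,
so the colors present at that moment are exactly `0, 1, …, urnColors ζ n ω`). -/
def urnColors (ζ : ℕ → Ω → ℕ) (n : ℕ) (ω : Ω) : ℕ := ∑ i ∈ Finset.Icc 1 n, ζ i ω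

/-- σ-algebra of the urn history up to (and including) step `n`. -/
def urnPast (ζ B : ℕ → Ω → ℕ) (n : ℕ) : MeasurableSpace Ω :=
  (⨆ i ∈ Finset.Icc 1 n, MeasurableSpace.comap (ζ i) ⊤) ⊔
  ⨆ i ∈ Finset.Icc 1 n, MeasurableSpace.comap (B i) ⊤

/-- σ-algebra of the urn history just before the draw of step `n` (it includes the
addition phase of step `n`). -/
def urnHist (ζ B : ℕ → Ω → ℕ) (n : ℕ) : MeasurableSpace Ω :=
  urnPast ζ B (n - 1) ⊔ MeasurableSpace.comap (ζ n) ⊤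

/-- `IsUrn ρ ν P ζ B` asserts that, under the probability measure `P`, the pair of
processes `(ζ n, B n)_{n ≥ 1}` performs the `(ρ,ν)`-TBRW urn process: at each step
`n ≥ 1`, first `ζ n ∼ ν` new balls (with brand new colors, numbered consecutively) are
added to the urn independently of the past, then a ball is drawn from the urn with
probability proportional to its weight (color `0` having weight `ρ`, every other ball
weight `1`), its color `B n` is recorded, and it is returned to the urn. -/
structure IsUrn (ρ : ℝ) (ν : PMF ℕ) (P : Measure Ω) (ζ B : ℕ → Ω → ℕ) : Prop where
  prob : IsProbabilityMeasure P
  measζ : ∀ n, Measurable (ζ n)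
  measB : ∀ n, Measurable (B n)
  ζ_law : ∀ n, 1 ≤ n → P.map (ζ n) = ν.toMeasure
  ζ_indep : ∀ n, 1 ≤ n → Indep (MeasurableSpace.comap (ζ n) ⊤) (urnPast ζ B (n - 1)) P
  B_le : ∀ n ω, 1 ≤ n → B n ω ≤ urnColors ζ n ω
  draw_zero : ∀ n, 1 ≤ n → ∀ c : ℕ, ∀ H : Set Ω, MeasurableSet[urnHist ζ B n] H →
      P (H ∩ {ω | urnColors ζ n ω = c} ∩ {ω | B n ω = 0}) =
        ENNReal.ofReal (ρ / (ρ + c)) * P (H ∩ {ω | urnColors ζ n ω = c})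
  draw_pos : ∀ n, 1 ≤ n → ∀ c j : ℕ, 1 ≤ j → j ≤ c → ∀ H : Set Ω,
      MeasurableSet[urnHist ζ B n] H →
      P (H ∩ {ω | urnColors ζ n ω = c} ∩ {ω | B n ω = j}) =
        ENNReal.ofReal (1 / (ρ + c)) * P (H ∩ {ω | urnColors ζ n ω = c})

/-- Number of draws of color `0` up to step `n`. -/
def zeroCount (B : ℕ → Ω → ℕ) (n : ℕ) (ω : Ω) : ℕ :=
  ((Finset.Icc 1 n).filter (fun i => B i ω = 0)).card

/-- `Θ_k`: the step at which color `0` is drawn from the urn for the `k`-th time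
(`Θ_0 = 0`; junk value `0` if color `0` is drawn fewer than `k` times). -/
noncomputable def Theta (B : ℕ → Ω → ℕ) (k : ℕ) (ω : Ω) : ℕ :=
  if k = 0 then 0 else sInf {n : ℕ | 1 ≤ n ∧ zeroCount B n ω = k}

/-- `N_k`: number of non-zero colors present in the urn at step `Θ_k`. -/
noncomputable def Ncol (ζ B : ℕ → Ω → ℕ) (k : ℕ) (ω : Ω) : ℕ :=
  urnColors ζ (Theta B k ω) ω

/-- `Y_k^j`: number of times color `j` has been drawn from the urn up to step `Θ_k`. -/
noncomputable def Ydraw (ζ B : ℕ → Ω → ℕ) (k j : ℕ) (ω : Ω) : ℕ :=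
  ((Finset.Icc 1 (Theta B k ω)).filter (fun i => B i ω = j)).card

section Sched

def cumG (g : ℕ → ℕ) (c : ℕ) : ℕ := ∑ i ∈ Finset.range c, g i

def sched (g : ℕ → ℕ) (j t : ℕ) : ℕ :=
  if t ≤ cumG g j then 1 + ((Finset.range j).filter (fun c => cumG g (c+1) < t)).card else 0

variable {g : ℕ → ℕ} {j : ℕ}

lemma cumG_mono {a b : ℕ} (hab : a ≤ b) : cumG g a ≤ cumG g b :=
  Finset.sum_le_sum_of_subset (Finset.range_subset_range.2 hab)

lemma cumG_ge (hg : ∀ i, 1 ≤ g i) (c : ℕ) : c ≤ cumG g c := by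
  calc c = ∑ i ∈ Finset.range c, 1 := by simp
    _ ≤ cumG g c := Finset.sum_le_sum fun i _ => hg i

lemma sched_of_gt {t : ℕ} (ht : cumG g j < t) : sched g j t = 0 := by
  rw [sched, if_neg (by omega)]

lemma sched_interval (hg : ∀ i, 1 ≤ g i) {ℓ t : ℕ} (hℓ1 : 1 ≤ ℓ) (hℓj : ℓ ≤ j)
    (h1 : cumG g (ℓ-1) < t) (h2 : t ≤ cumG g ℓ) : sched g j t = ℓ := by
  have htS : t ≤ cumG g j := le_trans h2 (cumG_mono hℓj)
  rw [sched, if_pos htS]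
  have hfil : (Finset.range j).filter (fun c => cumG g (c+1) < t) = Finset.range (ℓ-1) := by
    ext c
    simp only [Finset.mem_filter, Finset.mem_range]
    constructor
    · rintro ⟨hcj, hct⟩
      by_contra hc
      push_neg at hc
      have : cumG g ℓ ≤ cumG g (c+1) := cumG_mono (by omega)
      omega
    · intro hc
      have h3 : cumG g (c+1) ≤ cumG g (ℓ-1) := cumG_mono (by omega)
      exact ⟨by omega, by omega⟩
  rw [hfil, Finset.card_range]
  omega

lemma sched_exists (hg : ∀ i, 1 ≤ g i) {t : ℕ} (ht1 : 1 ≤ t) (ht2 : t ≤ cumG g j) :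
    ∃ ℓ, 1 ≤ ℓ ∧ ℓ ≤ j ∧ cumG g (ℓ-1) < t ∧ t ≤ cumG g ℓ := by
  have hne : {n : ℕ | t ≤ cumG g n}.Nonempty := ⟨j, ht2⟩
  set ℓ := sInf {n : ℕ | t ≤ cumG g n} with hℓ
  have hmem := Nat.sInf_mem hne
  have h0 : ℓ ≠ 0 := by
    intro hc
    have : t ≤ cumG g 0 := by rw [← hc]; exact hmem
    simp [cumG] at this
    omega
  have hj : ℓ ≤ j := Nat.sInf_le ht2
  have hlt : cumG g (ℓ-1) < t := by
    have : ℓ - 1 ∉ {n : ℕ | t ≤ cumG g n} := Nat.notMem_of_lt_sInf (by omega)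
    simp only [Set.mem_setOf_eq, not_le] at this
    exact this
  exact ⟨ℓ, by omega, hj, hlt, hmem⟩

lemma sched_pos (hg : ∀ i, 1 ≤ g i) {t : ℕ} (ht1 : 1 ≤ t) (ht2 : t ≤ cumG g j) :
    1 ≤ sched g j t ∧ sched g j t ≤ t ∧ sched g j t ≤ j := by
  obtain ⟨ℓ, h1, h2, h3, h4⟩ := sched_exists hg ht1 ht2
  rw [sched_interval hg h1 h2 h3 h4]
  have := cumG_ge hg (ℓ-1)
  exact ⟨h1, by omega, h2⟩

lemma sched_zero_iff (hg : ∀ i, 1 ≤ g i) {t : ℕ} (ht1 : 1 ≤ t) :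
    sched g j t = 0 ↔ cumG g j < t := by
  constructor
  · intro hc
    by_contra hc2
    push_neg at hc2
    have := (sched_pos hg ht1 hc2).1
    omega
  · exact sched_of_gt

lemma sched_count (hg : ∀ i, 1 ≤ g i) {ℓ : ℕ} (hℓ1 : 1 ≤ ℓ) (hℓj : ℓ ≤ j) {T : ℕ}
    (hT : cumG g j ≤ T) :
    ((Finset.Icc 1 T).filter (fun t => sched g j t = ℓ)).card = g (ℓ-1) := by
  have hfil : (Finset.Icc 1 T).filter (fun t => sched g j t = ℓ)
      = Finset.Icc (cumG g (ℓ-1) + 1) (cumG g ℓ) := by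
    ext t
    simp only [Finset.mem_filter, Finset.mem_Icc]
    constructor
    · rintro ⟨⟨ht1, htT⟩, hs⟩
      by_cases htS : t ≤ cumG g j
      · obtain ⟨ℓ', h1, h2, h3, h4⟩ := sched_exists hg ht1 htS
        have := sched_interval hg h1 h2 h3 h4
        rw [this] at hs
        subst hs
        omega
      · rw [sched_of_gt (by omega)] at hs
        omega
    · rintro ⟨h1, h2⟩
      have hS : cumG g ℓ ≤ cumG g j := cumG_mono hℓj
      have ht1 : 1 ≤ t := by omega
      exact ⟨⟨ht1, by omega⟩, sched_interval hg hℓ1 hℓj (by omega) h2⟩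
  rw [hfil, Nat.card_Icc]
  have hle : cumG g (ℓ-1) ≤ cumG g ℓ := cumG_mono (by omega)
  have hstep : cumG g ℓ = cumG g (ℓ-1) + g (ℓ-1) := by
    have : ℓ = (ℓ-1) + 1 := by omega
    rw [this]
    rw [cumG, Finset.sum_range_succ]
    rfl
  omega

lemma sched_count_gt (hg : ∀ i, 1 ≤ g i) {ℓ : ℕ} (hℓj : j < ℓ) (T : ℕ) :
    ((Finset.Icc 1 T).filter (fun t => sched g j t = ℓ)).card = 0 := by
  rw [Finset.card_eq_zero, Finset.filter_eq_empty_iff]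
  intro t ht
  rw [Finset.mem_Icc] at ht
  intro hs
  by_cases htS : t ≤ cumG g j
  · have := (sched_pos hg ht.1 htS).2.2
    omega
  · rw [sched_of_gt (by omega)] at hs
    omega

end Sched

/-- truncated first moment -/
noncomputable def excessMoment (ν : PMF ℕ) (M : ℕ) : ℝ≥0∞ := ∑' k : ℕ, ((k - M : ℕ) : ℝ≥0∞) * ν k

lemma exists_truncation {ν : PMF ℕ} (hν : nubar ν < ⊤) {ε : ℝ≥0∞} (hε : 0 < ε) :
    ∃ M : ℕ, 1 ≤ M ∧ excessMoment ν M ≤ ε := by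
  set f : ℕ → ℝ≥0∞ := fun k => (k : ℝ≥0∞) * ν k with hf
  have hpart : ∀ M : ℕ, excessMoment ν M + ∑ k ∈ Finset.range (M+1), f k ≤ nubar ν := by
    intro M
    rw [excessMoment, nubar]
    have hsum : ∑ k ∈ Finset.range (M+1), f k
        = ∑' k : ℕ, (if k < M+1 then f k else 0) := by
      rw [tsum_eq_sum (s := Finset.range (M+1)) ?_]
      · exact Finset.sum_congr rfl fun k hk => by
          rw [if_pos (Finset.mem_range.1 hk)]
      · intro k hk
        rw [if_neg (by simpa using hk)]
    rw [hsum, ← ENNReal.tsum_add]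
    refine ENNReal.tsum_le_tsum fun k => ?_
    by_cases hk : k < M + 1
    · rw [if_pos hk]
      have : (k - M : ℕ) = 0 := by omega
      rw [this]
      simp [hf]
    · rw [if_neg hk, add_zero]
      show ((k - M : ℕ) : ℝ≥0∞) * ν k ≤ (k : ℝ≥0∞) * ν k
      refine mul_le_mul_left ?_ _
      exact_mod_cast Nat.sub_le k M
  by_cases hbig : nubar ν ≤ ε
  · refine ⟨1, le_rfl, le_trans ?_ hbig⟩
    calc excessMoment ν 1 ≤ excessMoment ν 1 + ∑ k ∈ Finset.range 2, f k := le_self_add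
      _ ≤ nubar ν := hpart 1
  · push_neg at hbig
    have hsup : nubar ν = ⨆ n : ℕ, ∑ k ∈ Finset.range n, f k := ENNReal.tsum_eq_iSup_sum' _
      fun t => ⟨t.sup id + 1, fun x hx => Finset.mem_range.2 (by
        exact lt_of_le_of_lt (Finset.le_sup (f := id) hx) (Nat.lt_succ_self _))⟩
    have hlt : nubar ν - ε < nubar ν := by
      refine ENNReal.sub_lt_self hν.ne ?_ hε.ne'
      intro hc
      rw [hc] at hbig
      exact absurd hbig (by simp)
    conv at hlt => rw [hsup]
    obtain ⟨n, hn⟩ := lt_iSup_iff.1 hlt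
    rw [← hsup] at hn
    refine ⟨n + 1, by omega, ?_⟩
    have hmono : ∑ k ∈ Finset.range n, f k ≤ ∑ k ∈ Finset.range (n+1+1), f k :=
      Finset.sum_le_sum_of_subset (Finset.range_subset_range.2 (by omega))
    have h1 : nubar ν - ε ≤ ∑ k ∈ Finset.range (n+1+1), f k := le_trans hn.le hmono
    have h2 : nubar ν ≤ ∑ k ∈ Finset.range (n+1+1), f k + ε := tsub_le_iff_right.1 h1
    have h3 := hpart (n+1)
    have hfin : ∑ k ∈ Finset.range (n+1+1), f k ≠ ⊤ :=
      ne_top_of_le_ne_top hν.ne (le_trans le_add_self (hpart (n+1)))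
    -- excess + partial ≤ nubar ≤ partial + ε  ⇒ excess ≤ ε
    have h4 : excessMoment ν (n+1) + ∑ k ∈ Finset.range (n+1+1), f k
        ≤ ε + ∑ k ∈ Finset.range (n+1+1), f k := by
      refine le_trans h3 (le_trans h2 ?_)
      rw [add_comm]
    exact ENNReal.le_of_add_le_add_right hfin h4

lemma real_pow_bound {x : ℝ} (h0 : 0 ≤ x) (h1 : x ≤ 1) (T : ℕ) :
    (1-x)^T * (1 + T*x) ≤ 1 := by
  induction T with
  | zero => simp
  | succ T ih =>
    have key : (1-x)^(T+1) * (1 + ((T:ℕ)+1 : ℕ)*x) ≤ (1-x)^T * (1 + T*x) := by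
      push_cast
      have expand : (1-x)^(T+1) * (1 + (T+1)*x)
          = (1-x)^T * ((1-x) * (1 + (T+1 : ℕ)*x)) := by
        push_cast
        ring
      rw [expand]
      refine mul_le_mul_of_nonneg_left ?_ (pow_nonneg (by linarith) T)
      have : (1-x) * (1 + (T+1 : ℕ)*x) = 1 + T*x - (T+1)*x^2 := by push_cast; ring
      rw [this]
      have : (0:ℝ) ≤ (T+1)*x^2 := by positivity
      push_cast
      linarith
    exact le_trans key ih

lemma real_pow_le_inv {x : ℝ} (h0 : 0 ≤ x) (h1 : x ≤ 1) {T : ℕ} {a : ℝ} (ha : 0 ≤ a)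
    (hTx : a ≤ T * x) : (1-x)^T ≤ 1/(1+a) := by
  have h2 : (1-x)^T * (1+a) ≤ (1-x)^T * (1 + T*x) := by
    refine mul_le_mul_of_nonneg_left (by linarith) (pow_nonneg (by linarith) T)
  have h3 : (1-x)^T * (1+a) ≤ 1 := le_trans h2 (real_pow_bound h0 h1 T)
  rw [le_div_iff₀ (by linarith)]
  linarith [h3]


section Infra
variable {ζ B : ℕ → Ω → ℕ}

lemma comap_zeta_le_urnPast {i n : ℕ} (h1 : 1 ≤ i) (h2 : i ≤ n) :
    MeasurableSpace.comap (ζ i) ⊤ ≤ urnPast ζ B n := by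
  refine le_trans ?_ le_sup_left
  exact le_biSup (f := fun i => MeasurableSpace.comap (ζ i) (⊤ : MeasurableSpace ℕ))
    (Finset.mem_Icc.2 ⟨h1, h2⟩)

lemma comap_B_le_urnPast {i n : ℕ} (h1 : 1 ≤ i) (h2 : i ≤ n) :
    MeasurableSpace.comap (B i) ⊤ ≤ urnPast ζ B n := by
  refine le_trans ?_ le_sup_right
  exact le_biSup (f := fun i => MeasurableSpace.comap (B i) (⊤ : MeasurableSpace ℕ))
    (Finset.mem_Icc.2 ⟨h1, h2⟩)

lemma urnPast_mono {m n : ℕ} (hmn : m ≤ n) : urnPast ζ B m ≤ urnPast (Ω := Ω) ζ B n := by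
  apply sup_le_sup
  · exact biSup_mono fun i hi => Finset.mem_Icc.2 ⟨(Finset.mem_Icc.1 hi).1, le_trans (Finset.mem_Icc.1 hi).2 hmn⟩
  · exact biSup_mono fun i hi => Finset.mem_Icc.2 ⟨(Finset.mem_Icc.1 hi).1, le_trans (Finset.mem_Icc.1 hi).2 hmn⟩

lemma urnPast_le_urnHist {n : ℕ} : urnPast ζ B (n-1) ≤ urnHist (Ω := Ω) ζ B n := le_sup_left

lemma comap_zeta_le_urnHist {n : ℕ} : MeasurableSpace.comap (ζ n) ⊤ ≤ urnHist (Ω := Ω) ζ B n :=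
  le_sup_right

lemma urnHist_le_urnPast {n : ℕ} (hn : 1 ≤ n) : urnHist ζ B n ≤ urnPast (Ω := Ω) ζ B n :=
  sup_le (urnPast_mono (Nat.sub_le n 1)) (comap_zeta_le_urnPast hn le_rfl)

lemma urnPast_le_urnHist_succ {m n : ℕ} (h : m + 1 ≤ n) :
    urnPast ζ B m ≤ urnHist (Ω := Ω) ζ B n :=
  le_trans (urnPast_mono (by omega)) (urnPast_le_urnHist (ζ := ζ) (B := B) (n := n))

lemma measurable_zeta_urnPast {i n : ℕ} (h1 : 1 ≤ i) (h2 : i ≤ n) :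
    Measurable[urnPast ζ B n] (ζ i) :=
  fun _s _hs => comap_zeta_le_urnPast h1 h2 _ ⟨_, trivial, rfl⟩

lemma measurable_B_urnPast {i n : ℕ} (h1 : 1 ≤ i) (h2 : i ≤ n) :
    Measurable[urnPast ζ B n] (B i) :=
  fun _s _hs => comap_B_le_urnPast h1 h2 _ ⟨_, trivial, rfl⟩

lemma measurable_urnColors_urnPast {n : ℕ} : Measurable[urnPast ζ B n] (urnColors ζ n) := by
  unfold urnColors
  refine Finset.measurable_sum _ fun i hi => ?_
  exact measurable_zeta_urnPast (Finset.mem_Icc.1 hi).1 (Finset.mem_Icc.1 hi).2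

lemma urnColors_succ {n : ℕ} (hn : 1 ≤ n) (ω : Ω) :
    urnColors ζ n ω = urnColors ζ (n-1) ω + ζ n ω := by
  unfold urnColors
  have : Finset.Icc 1 n = insert n (Finset.Icc 1 (n-1)) := by
    ext t; simp [Finset.mem_Icc, Finset.mem_insert]; omega
  rw [this, Finset.sum_insert (by simp [Finset.mem_Icc]; omega), add_comm]

lemma measurable_urnColors_urnHist {n : ℕ} (hn : 1 ≤ n) :
    Measurable[urnHist ζ B n] (urnColors ζ n) := by
  have h1 : Measurable[urnHist ζ B n] (urnColors ζ (n-1)) :=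
    (measurable_urnColors_urnPast (n := n-1)).mono (urnPast_le_urnHist) le_rfl
  have h2 : Measurable[urnHist ζ B n] (ζ n) :=
    fun _s _hs => comap_zeta_le_urnHist _ ⟨_, trivial, rfl⟩
  have := h1.add h2
  convert this using 1
  funext ω; exact urnColors_succ hn ω

lemma urnColors_mono {m n : ℕ} (hmn : m ≤ n) (ω : Ω) : urnColors ζ m ω ≤ urnColors ζ n ω :=
  Finset.sum_le_sum_of_subset (Finset.Icc_subset_Icc_right hmn)

end Infra

section Draw
variable {ρ : ℝ} {ν : PMF ℕ} {P : Measure Ω} {ζ B : ℕ → Ω → ℕ}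

lemma IsUrn.urnPast_le (h : IsUrn ρ ν P ζ B) (n : ℕ) : urnPast ζ B n ≤ ‹MeasurableSpace Ω› := by
  apply sup_le <;> refine iSup_le fun i => iSup_le fun _ => ?_
  · exact (h.measζ i).comap_le
  · exact (h.measB i).comap_le

lemma IsUrn.urnHist_le (h : IsUrn ρ ν P ζ B) (n : ℕ) : urnHist ζ B n ≤ ‹MeasurableSpace Ω› :=
  sup_le (h.urnPast_le _) (h.measζ n).comap_le

lemma IsUrn.meas_urnColors (h : IsUrn ρ ν P ζ B) (n : ℕ) : Measurable (urnColors ζ n) :=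
  Finset.measurable_sum _ fun i _ => h.measζ i

lemma measure_partition_urnColors (h : IsUrn ρ ν P ζ B) (n : ℕ) {H : Set Ω}
    (hH : MeasurableSet H) :
    P H = ∑' c : ℕ, P (H ∩ {ω | urnColors ζ n ω = c}) := by
  have hcov : H = ⋃ c : ℕ, H ∩ {ω | urnColors ζ n ω = c} := by
    ext ω
    simp only [Set.mem_iUnion, Set.mem_inter_iff, Set.mem_setOf_eq]
    exact ⟨fun hω => ⟨urnColors ζ n ω, hω, rfl⟩, fun ⟨c, hω, _⟩ => hω⟩
  conv_lhs => rw [hcov]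
  rw [measure_iUnion]
  · intro i j hij
    simp only [Function.onFun]
    refine Set.disjoint_left.2 fun ω h1 h2 => hij ?_
    rw [← h1.2, ← h2.2]
  · intro c
    exact hH.inter (h.meas_urnColors n (measurableSet_singleton c))

lemma IsUrn.draw_zero_tsum (h : IsUrn ρ ν P ζ B) {n : ℕ} (hn : 1 ≤ n) {H : Set Ω}
    (hH : MeasurableSet[urnHist ζ B n] H) :
    P (H ∩ {ω | B n ω = 0}) =
      ∑' c : ℕ, ENNReal.ofReal (ρ / (ρ + c)) * P (H ∩ {ω | urnColors ζ n ω = c}) := by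
  have hHa : MeasurableSet H := h.urnHist_le n _ hH
  have hB0 : MeasurableSet {ω | B n ω = 0} := h.measB n (measurableSet_singleton 0)
  rw [measure_partition_urnColors h n (hHa.inter hB0)]
  refine tsum_congr fun c => ?_
  rw [Set.inter_right_comm]
  exact h.draw_zero n hn c H hH

lemma IsUrn.draw_pos_tsum (h : IsUrn ρ ν P ζ B) {n : ℕ} (hn : 1 ≤ n) {c : ℕ} (hc : 1 ≤ c)
    {H : Set Ω} (hH : MeasurableSet[urnHist ζ B n] H)
    (hsub : ∀ ω ∈ H, c ≤ urnColors ζ n ω) :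
    P (H ∩ {ω | B n ω = c}) =
      ∑' C : ℕ, ENNReal.ofReal (1 / (ρ + C)) * P (H ∩ {ω | urnColors ζ n ω = C}) := by
  have hHa : MeasurableSet H := h.urnHist_le n _ hH
  have hBc : MeasurableSet {ω | B n ω = c} := h.measB n (measurableSet_singleton c)
  rw [measure_partition_urnColors h n (hHa.inter hBc)]
  refine tsum_congr fun C => ?_
  by_cases hC : c ≤ C
  · rw [Set.inter_right_comm]
    exact h.draw_pos n hn C c hc hC H hH
  · have hemp : H ∩ {ω | urnColors ζ n ω = C} = ∅ := by
      ext ω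
      simp only [Set.mem_inter_iff, Set.mem_setOf_eq, Set.mem_empty_iff_false, iff_false]
      rintro ⟨hω, hcol⟩
      exact hC (hcol ▸ hsub ω hω)
    rw [Set.inter_right_comm, hemp]
    simp

lemma IsUrn.draw_ratio (h : IsUrn ρ ν P ζ B) (hρ : 0 ≤ ρ) {n : ℕ} (hn : 1 ≤ n) {c : ℕ}
    (hc : 1 ≤ c) {H : Set Ω} (hH : MeasurableSet[urnHist ζ B n] H)
    (hsub : ∀ ω ∈ H, c ≤ urnColors ζ n ω) :
    P (H ∩ {ω | B n ω = 0}) = ENNReal.ofReal ρ * P (H ∩ {ω | B n ω = c}) := by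
  rw [h.draw_zero_tsum hn hH, h.draw_pos_tsum hn hc hH hsub, ← ENNReal.tsum_mul_left]
  refine tsum_congr fun C => ?_
  rw [← mul_assoc, ← ENNReal.ofReal_mul hρ, mul_one_div]

lemma IsUrn.draw_zero_ge (h : IsUrn ρ ν P ζ B) (hρ : 0 < ρ) {n : ℕ} (hn : 1 ≤ n) (L : ℕ)
    {H : Set Ω} (hH : MeasurableSet[urnHist ζ B n] H)
    (hsub : ∀ ω ∈ H, urnColors ζ n ω ≤ L) :
    ENNReal.ofReal (ρ / (ρ + L)) * P H ≤ P (H ∩ {ω | B n ω = 0}) := by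
  have hHa : MeasurableSet H := h.urnHist_le n _ hH
  rw [h.draw_zero_tsum hn hH, measure_partition_urnColors h n hHa, ← ENNReal.tsum_mul_left]
  refine ENNReal.tsum_le_tsum fun C => ?_
  by_cases hC : C ≤ L
  · refine mul_le_mul_left (ENNReal.ofReal_le_ofReal ?_) _
    apply div_le_div_of_nonneg_left hρ.le (by positivity)
    have : (C : ℝ) ≤ L := by exact_mod_cast hC
    linarith
  · have hemp : H ∩ {ω | urnColors ζ n ω = C} = ∅ := by
      ext ω
      simp only [Set.mem_inter_iff, Set.mem_setOf_eq, Set.mem_empty_iff_false, iff_false]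
      rintro ⟨hω, hcol⟩
      exact hC (hcol ▸ hsub ω hω)
    rw [hemp]
    simp

lemma IsUrn.draw_ne_zero_le (h : IsUrn ρ ν P ζ B) (hρ : 0 < ρ) {n : ℕ} (hn : 1 ≤ n) (L : ℕ)
    {H : Set Ω} (hH : MeasurableSet[urnHist ζ B n] H)
    (hsub : ∀ ω ∈ H, urnColors ζ n ω ≤ L) :
    P (H ∩ {ω | ¬ B n ω = 0}) ≤ ENNReal.ofReal (1 - ρ / (ρ + L)) * P H := by
  haveI := h.prob
  have hHa : MeasurableSet H := h.urnHist_le n _ hH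
  have hB0 : MeasurableSet {ω | B n ω = 0} := h.measB n (measurableSet_singleton 0)
  have hsplit : P (H ∩ {ω | B n ω = 0}) + P (H ∩ {ω | ¬ B n ω = 0}) = P H := by
    have := measure_inter_add_diff (μ := P) H hB0
    rwa [Set.diff_eq, Set.compl_setOf] at this
  have hr0 : (0:ℝ) ≤ ρ / (ρ + L) := by positivity
  have hr1 : ρ / (ρ + L) ≤ 1 := by
    rw [div_le_one (by positivity)]
    simp [Nat.cast_nonneg]
  have key : P (H ∩ {ω | ¬ B n ω = 0}) + ENNReal.ofReal (ρ / (ρ + L)) * P H ≤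
      ENNReal.ofReal (1 - ρ / (ρ + L)) * P H + ENNReal.ofReal (ρ / (ρ + L)) * P H := by
    calc P (H ∩ {ω | ¬ B n ω = 0}) + ENNReal.ofReal (ρ / (ρ + L)) * P H
        ≤ P (H ∩ {ω | ¬ B n ω = 0}) + P (H ∩ {ω | B n ω = 0}) :=
          add_le_add_right (h.draw_zero_ge hρ hn L hH hsub) _
      _ = P H := by rw [add_comm, hsplit]
      _ = ENNReal.ofReal (1 - ρ / (ρ + L)) * P H + ENNReal.ofReal (ρ / (ρ + L)) * P H := by
          rw [← add_mul, ← ENNReal.ofReal_add (by linarith) hr0]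
          have h1 : 1 - ρ / (ρ + L) + ρ / (ρ + L) = 1 := by ring
          rw [h1, ENNReal.ofReal_one, one_mul]
  have hfin : ENNReal.ofReal (ρ / (ρ + L)) * P H ≠ ⊤ :=
    ENNReal.mul_ne_top ENNReal.ofReal_ne_top (measure_ne_top P H)
  exact ENNReal.le_of_add_le_add_right hfin key

end Draw

section Mom
variable {ρ : ℝ} {ν : PMF ℕ} {P : Measure Ω} {ζ B : ℕ → Ω → ℕ}

lemma IsUrn.indep_zeta (h : IsUrn ρ ν P ζ B) {n : ℕ} (hn : 1 ≤ n) {G : Set Ω}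
    (hG : MeasurableSet[urnPast ζ B (n-1)] G) (S : Set ℕ) :
    P (G ∩ ζ n ⁻¹' S) = ν.toMeasure S * P G := by
  haveI := h.prob
  have hind : IndepSet (ζ n ⁻¹' S) G P :=
    (h.ζ_indep n hn).indepSet_of_measurableSet ⟨S, trivial, rfl⟩ hG
  have hms : MeasurableSet (ζ n ⁻¹' S) := h.measζ n (by trivial)
  have hmg : MeasurableSet G := h.urnPast_le (n-1) _ hG
  have := (indepSet_iff_measure_inter_eq_mul hms hmg P).mp hind
  rw [Set.inter_comm] at this
  rw [this]
  rw [← Measure.map_apply (h.measζ n) (by trivial), h.ζ_law n hn]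

lemma IsUrn.zeta_moment (h : IsUrn ρ ν P ζ B) {n : ℕ} (hn : 1 ≤ n) {G : Set Ω}
    (hG : MeasurableSet[urnPast ζ B (n-1)] G) (f : ℕ → ℝ≥0∞) :
    ∫⁻ ω in G, f (ζ n ω) ∂P = (∑' k : ℕ, f k * ν k) * P G := by
  have hpt : ∀ ω, f (ζ n ω) = ∑' k : ℕ, Set.indicator (ζ n ⁻¹' {k}) (fun _ => f k) ω := by
    intro ω
    rw [tsum_eq_single (ζ n ω) (fun k hk => Set.indicator_of_notMem (by simpa using (Ne.symm hk)) _)]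
    exact (Set.indicator_of_mem rfl _).symm
  calc ∫⁻ ω in G, f (ζ n ω) ∂P
      = ∫⁻ ω in G, ∑' k : ℕ, Set.indicator (ζ n ⁻¹' {k}) (fun _ => f k) ω ∂P := by
        exact lintegral_congr fun ω => hpt ω
    _ = ∑' k : ℕ, ∫⁻ ω in G, Set.indicator (ζ n ⁻¹' {k}) (fun _ => f k) ω ∂P := by
        refine lintegral_tsum fun k => ?_
        exact ((measurable_const.indicator (h.measζ n (measurableSet_singleton k))).aemeasurable)
    _ = ∑' k : ℕ, f k * P (G ∩ ζ n ⁻¹' {k}) := by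
        refine tsum_congr fun k => ?_
        rw [lintegral_indicator (h.measζ n (measurableSet_singleton k)), setLIntegral_const,
          Measure.restrict_apply (h.measζ n (measurableSet_singleton k)), Set.inter_comm, mul_comm]
    _ = ∑' k : ℕ, (f k * ν k) * P G := by
        refine tsum_congr fun k => ?_
        rw [h.indep_zeta hn hG, PMF.toMeasure_apply_singleton _ _ (measurableSet_singleton k),
          ← mul_assoc]
    _ = (∑' k : ℕ, f k * ν k) * P G := ENNReal.tsum_mul_right

lemma IsUrn.excess_bound (h : IsUrn ρ ν P ζ B) (M s T : ℕ) {G : Set Ω}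
    (hG : MeasurableSet[urnPast ζ B s] G) :
    (↑(M*T+1) : ℝ≥0∞) * P (G ∩ {ω | M*T+1 ≤ ∑ i ∈ Finset.Icc (s+1) (s+T), (ζ i ω - M)}) ≤
      (T : ℝ≥0∞) * (∑' k : ℕ, ((k - M : ℕ) : ℝ≥0∞) * ν k) * P G := by
  have hGm : MeasurableSet G := h.urnPast_le s _ hG
  set X : Ω → ℕ := fun ω => ∑ i ∈ Finset.Icc (s+1) (s+T), (ζ i ω - M) with hX
  have hXm : Measurable X := Finset.measurable_sum _ fun i _ => (h.measζ i).sub measurable_const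
  have h1 : (↑(M*T+1) : ℝ≥0∞) * P (G ∩ {ω | M*T+1 ≤ X ω}) ≤ ∫⁻ ω in G, (X ω : ℝ≥0∞) ∂P := by
    have hset : {ω | (↑(M*T+1) : ℝ≥0∞) ≤ (X ω : ℝ≥0∞)} = {ω | M*T+1 ≤ X ω} := by
      ext ω; simp only [Set.mem_setOf_eq]; exact_mod_cast Iff.rfl
    have hXe : Measurable fun ω => (X ω : ℝ≥0∞) := measurable_from_top.comp hXm
    have hms : MeasurableSet {ω | M*T+1 ≤ X ω} := hXm measurableSet_Ici
    have hb := mul_meas_ge_le_lintegral₀ (μ := P.restrict G)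
      hXe.aemeasurable (↑(M*T+1) : ℝ≥0∞)
    rw [hset, Measure.restrict_apply hms, Set.inter_comm] at hb
    exact hb
  refine le_trans h1 ?_
  have h2 : ∫⁻ ω in G, (X ω : ℝ≥0∞) ∂P
      = ∑ i ∈ Finset.Icc (s+1) (s+T), ∫⁻ ω in G, ((ζ i ω - M : ℕ) : ℝ≥0∞) ∂P := by
    rw [← lintegral_finset_sum]
    · refine lintegral_congr fun ω => ?_
      rw [hX]; push_cast; rfl
    · exact fun i _ => measurable_from_top.comp ((h.measζ i).sub measurable_const)
  rw [h2]
  have h3 : ∀ i ∈ Finset.Icc (s+1) (s+T), ∫⁻ ω in G, ((ζ i ω - M : ℕ) : ℝ≥0∞) ∂P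
      = (∑' k : ℕ, ((k - M : ℕ) : ℝ≥0∞) * ν k) * P G := by
    intro i hi
    have hi1 : 1 ≤ i := by have := (Finset.mem_Icc.1 hi).1; omega
    have hsle : s ≤ i - 1 := by have := (Finset.mem_Icc.1 hi).1; omega
    exact h.zeta_moment hi1 (urnPast_mono hsle _ hG) (fun k => ((k - M : ℕ) : ℝ≥0∞))
  rw [Finset.sum_congr rfl h3, Finset.sum_const, Nat.card_Icc]
  have hcard : s + T + 1 - (s + 1) = T := by omega
  rw [hcard, nsmul_eq_mul, mul_assoc]
end Mom

section Comb
variable {B : ℕ → Ω → ℕ} {ω : Ω}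

lemma zeroCount_mono {n m : ℕ} (hnm : n ≤ m) (ω : Ω) :
    zeroCount B n ω ≤ zeroCount B m ω :=
  Finset.card_le_card (Finset.filter_subset_filter _ (Finset.Icc_subset_Icc_right hnm))

lemma zeroCount_le (n : ℕ) (ω : Ω) : zeroCount B n ω ≤ n := by
  calc zeroCount B n ω ≤ (Finset.Icc 1 n).card := Finset.card_filter_le _ _
    _ = n := by rw [Nat.card_Icc]; omega

lemma zeroCount_succ (n : ℕ) (ω : Ω) :
    zeroCount B (n+1) ω = zeroCount B n ω + (if B (n+1) ω = 0 then 1 else 0) := by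
  unfold zeroCount
  have : Finset.Icc 1 (n+1) = insert (n+1) (Finset.Icc 1 n) := by
    ext t; simp only [Finset.mem_Icc, Finset.mem_insert]; omega
  rw [this, Finset.filter_insert]
  by_cases hb : B (n+1) ω = 0
  · rw [if_pos hb, if_pos hb, Finset.card_insert_of_notMem (by simp [Finset.mem_Icc])]
  · rw [if_neg hb, if_neg hb, add_zero]

lemma zeroCount_eq_of_no_zero {n m : ℕ} (hnm : n ≤ m)
    (hno : ∀ i, n < i → i ≤ m → B i ω ≠ 0) : zeroCount B m ω = zeroCount B n ω := by
  unfold zeroCount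
  congr 1
  ext t
  simp only [Finset.mem_filter, Finset.mem_Icc]
  constructor
  · rintro ⟨⟨h1, h2⟩, h3⟩
    refine ⟨⟨h1, ?_⟩, h3⟩
    by_contra hc
    exact hno t (by omega) h2 h3
  · rintro ⟨⟨h1, h2⟩, h3⟩
    exact ⟨⟨h1, by omega⟩, h3⟩

lemma Theta_eq {k s : ℕ} (hk : k ≠ 0) (hs : 1 ≤ s) (hzc : zeroCount B s ω = k)
    (hlt : ∀ i, i < s → zeroCount B i ω < k) : Theta B k ω = s := by
  rw [Theta, if_neg hk]
  have hmem : s ∈ {n : ℕ | 1 ≤ n ∧ zeroCount B n ω = k} := ⟨hs, hzc⟩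
  refine le_antisymm (Nat.sInf_le hmem) ?_
  by_contra hc
  push_neg at hc
  have hm := Nat.sInf_mem (⟨s, hmem⟩ : {n : ℕ | 1 ≤ n ∧ zeroCount B n ω = k}.Nonempty)
  have := hlt _ hc
  rw [hm.2] at this
  exact lt_irrefl k this

lemma Theta_mem {k : ℕ} (hk : k ≠ 0) (hpos : 1 ≤ Theta B k ω) :
    zeroCount B (Theta B k ω) ω = k ∧ ∀ i, i < Theta B k ω → zeroCount B i ω ≠ k ∨ i = 0 := by
  rw [Theta, if_neg hk] at hpos ⊢
  have hne : {n : ℕ | 1 ≤ n ∧ zeroCount B n ω = k}.Nonempty := by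
    by_contra hc
    rw [Set.not_nonempty_iff_eq_empty] at hc
    rw [hc, Nat.sInf_empty] at hpos
    omega
  have hm := Nat.sInf_mem hne
  refine ⟨hm.2, fun i hi => ?_⟩
  have := Nat.notMem_of_lt_sInf hi
  simp only [Set.mem_setOf_eq, not_and] at this
  by_cases h1 : 1 ≤ i
  · exact Or.inl (this h1)
  · exact Or.inr (by omega)

lemma theta_zero (ω : Ω) : Theta B 0 ω = 0 := by rw [Theta, if_pos rfl]

end Comb


section Extra
variable {ρ : ℝ} {ν : PMF ℕ} {P : Measure Ω} {ζ B : ℕ → Ω → ℕ} {ω : Ω}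

lemma measurableSet_zeta {i n : ℕ} (h1 : 1 ≤ i) (h2 : i ≤ n) (S : Set ℕ) :
    MeasurableSet[urnPast ζ B n] (ζ i ⁻¹' S) :=
  comap_zeta_le_urnPast h1 h2 _ ⟨S, trivial, rfl⟩

lemma measurableSet_B {i n : ℕ} (h1 : 1 ≤ i) (h2 : i ≤ n) (S : Set ℕ) :
    MeasurableSet[urnPast ζ B n] (B i ⁻¹' S) :=
  comap_B_le_urnPast h1 h2 _ ⟨S, trivial, rfl⟩

lemma zeroCount_lt_of_le {n S : ℕ} (hw : ∀ i, 1 ≤ i → i ≤ n → B i ω = 0 → S < i) :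
    zeroCount B n ω ≤ n - S := by
  unfold zeroCount
  calc ((Finset.Icc 1 n).filter (fun i => B i ω = 0)).card
      ≤ (Finset.Icc (S+1) n).card := by
        apply Finset.card_le_card
        intro t ht
        simp only [Finset.mem_filter, Finset.mem_Icc] at ht ⊢
        have := hw t ht.1.1 ht.1.2 ht.2
        omega
    _ = n - S := by rw [Nat.card_Icc]; omega

lemma urnHist_mono {m t : ℕ} (h1 : 1 ≤ m) (hmt : m ≤ t) :
    urnHist ζ B m ≤ urnHist (Ω := Ω) ζ B t := by
  rcases eq_or_lt_of_le hmt with rfl | hlt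
  · exact le_rfl
  refine sup_le ?_ ?_
  · exact le_trans (urnPast_mono (by omega)) le_sup_left
  · exact le_trans (comap_zeta_le_urnPast h1 (by omega)) le_sup_left

lemma urnColors_split {s n : ℕ} (hsn : s ≤ n) (ζ : ℕ → Ω → ℕ) (ω : Ω) :
    urnColors ζ n ω = urnColors ζ s ω + ∑ t ∈ Finset.Icc (s+1) n, ζ t ω := by
  unfold urnColors
  rw [← Finset.sum_union ?_]
  · congr 1
    ext t; simp only [Finset.mem_union, Finset.mem_Icc]; omega
  · rw [Finset.disjoint_left]
    intro t ht1 ht2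
    simp only [Finset.mem_Icc] at ht1 ht2
    omega

end Extra


section Cyl
variable {ρ : ℝ} {ν : PMF ℕ} {P : Measure Ω} {ζ B : ℕ → Ω → ℕ}

lemma IsUrn.draw_zero_subset (h : IsUrn ρ ν P ζ B) {n : ℕ} (hn : 1 ≤ n) {c : ℕ} {H : Set Ω}
    (hH : MeasurableSet[urnHist ζ B n] H) (hsub : H ⊆ {ω | urnColors ζ n ω = c}) :
    P (H ∩ {ω | B n ω = 0}) = ENNReal.ofReal (ρ / (ρ + c)) * P H := by
  have := h.draw_zero n hn c H hH
  rwa [Set.inter_eq_left.2 hsub] at this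

lemma IsUrn.draw_pos_subset (h : IsUrn ρ ν P ζ B) {n : ℕ} (hn : 1 ≤ n) {c j : ℕ} (hj : 1 ≤ j)
    (hjc : j ≤ c) {H : Set Ω}
    (hH : MeasurableSet[urnHist ζ B n] H) (hsub : H ⊆ {ω | urnColors ζ n ω = c}) :
    P (H ∩ {ω | B n ω = j}) = ENNReal.ofReal (1 / (ρ + c)) * P H := by
  have := h.draw_pos n hn c j hj hjc H hH
  rwa [Set.inter_eq_left.2 hsub] at this

/-- The basic cylinder event of prescribed additions and draws has positive probability. -/
lemma IsUrn.cylinder_pos (h : IsUrn ρ ν P ζ B) (hρ : 0 < ρ) {m : ℕ} (hm : 1 ≤ m)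
    (hνm : ν m ≠ 0) (b : ℕ → ℕ) (hb : ∀ t, 1 ≤ t → b t ≤ t * m) (T : ℕ) :
    0 < P (⋂ t ∈ Finset.Icc 1 T, (ζ t ⁻¹' {m} ∩ {ω | B t ω = b t})) := by
  haveI := h.prob
  induction T with
  | zero => simp [Finset.Icc_eq_empty_of_lt]
  | succ T ih =>
    have hmeasE : MeasurableSet[urnPast ζ B T]
        (⋂ t ∈ Finset.Icc 1 T, (ζ t ⁻¹' {m} ∩ {ω | B t ω = b t})) := by
      refine Finset.measurableSet_biInter _ fun t ht => ?_
      rw [Finset.mem_Icc] at ht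
      exact (measurableSet_zeta ht.1 ht.2 _).inter (measurableSet_B ht.1 ht.2 {b t})
    have hsplit : (⋂ t ∈ Finset.Icc 1 (T+1), (ζ t ⁻¹' {m} ∩ {ω | B t ω = b t}))
        = ((⋂ t ∈ Finset.Icc 1 T, (ζ t ⁻¹' {m} ∩ {ω | B t ω = b t})) ∩ ζ (T+1) ⁻¹' {m})
          ∩ {ω | B (T+1) ω = b (T+1)} := by
      have hins : Finset.Icc 1 (T+1) = insert (T+1) (Finset.Icc 1 T) := by
        ext t; simp only [Finset.mem_Icc, Finset.mem_insert]; omega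
      rw [hins, Finset.set_biInter_insert, Set.inter_comm (ζ (T+1) ⁻¹' {m} ∩ _), Set.inter_assoc]
    set H := (⋂ t ∈ Finset.Icc 1 T, (ζ t ⁻¹' {m} ∩ {ω | B t ω = b t})) ∩ ζ (T+1) ⁻¹' {m}
      with hHdef
    have hHmeas : MeasurableSet[urnHist ζ B (T+1)] H := by
      refine MeasurableSet.inter ?_ ?_
      · exact le_sup_left (α := MeasurableSpace Ω) _ hmeasE
      · exact le_sup_right (α := MeasurableSpace Ω) _ ⟨{m}, trivial, rfl⟩
    have hHsub : H ⊆ {ω | urnColors ζ (T+1) ω = (T+1) * m} := by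
      intro ω hω
      have hζ : ∀ t, 1 ≤ t → t ≤ T + 1 → ζ t ω = m := by
        intro t ht1 ht2
        rcases Nat.lt_or_ge t (T+1) with hlt | hge
        · have h1 := hω.1
          simp only [Set.mem_iInter] at h1
          exact (h1 t (Finset.mem_Icc.2 ⟨ht1, by omega⟩)).1
        · have : t = T + 1 := by omega
          subst this
          exact hω.2
      show urnColors ζ (T+1) ω = (T+1) * m
      unfold urnColors
      rw [Finset.sum_congr rfl fun t ht => hζ t (Finset.mem_Icc.1 ht).1 (Finset.mem_Icc.1 ht).2]
      rw [Finset.sum_const, Nat.card_Icc, smul_eq_mul]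
      congr 1
    have hPH : P H = ν m * P (⋂ t ∈ Finset.Icc 1 T, (ζ t ⁻¹' {m} ∩ {ω | B t ω = b t})) := by
      have := h.indep_zeta (n := T+1) (by omega) hmeasE {m}
      rw [PMF.toMeasure_apply_singleton _ _ (measurableSet_singleton m)] at this
      exact this
    have hPHpos : 0 < P H := by
      rw [hPH]
      exact ENNReal.mul_pos hνm (ne_of_gt ih)
    rw [hsplit]
    rcases Nat.eq_zero_or_pos (b (T+1)) with hb0 | hbpos
    · rw [hb0, h.draw_zero_subset (by omega) hHmeas hHsub]
      refine ENNReal.mul_pos ?_ hPHpos.ne'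
      simp only [ne_eq, ENNReal.ofReal_eq_zero, not_le]
      positivity
    · rw [h.draw_pos_subset (by omega) hbpos (hb (T+1) (by omega)) hHmeas hHsub]
      refine ENNReal.mul_pos ?_ hPHpos.ne'
      simp only [ne_eq, ENNReal.ofReal_eq_zero, not_le]
      positivity


end Cyl

section PartTwo
variable {ρ : ℝ} {ν : PMF ℕ} {P : Measure Ω} {ζ B : ℕ → Ω → ℕ}

lemma exists_pos_support {ν : PMF ℕ} (hν0 : ν 0 < 1) : ∃ m, 1 ≤ m ∧ ν m ≠ 0 := by
  by_contra hc
  push_neg at hc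
  have h1 : ∀ m, 1 ≤ m → ν m = 0 := hc
  have htot := PMF.tsum_coe ν
  rw [tsum_eq_single 0 (fun k hk => h1 k (Nat.one_le_iff_ne_zero.2 hk))] at htot
  exact absurd htot hν0.ne

lemma part_two (h : IsUrn ρ ν P ζ B) (hρ : 0 < ρ) (hν0 : ν 0 < 1)
    (z : ℕ) (hz : 1 ≤ z) (j : ℕ) (g : Fin j → ℕ) (hg : ∀ i, 1 ≤ g i) :
    ∃ n : ℕ, 0 < P {ω | Ncol ζ B z ω = j + n ∧
        (∀ i : Fin j, Ydraw ζ B z ((i : ℕ) + 1) ω = g i) ∧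
        ∀ ℓ : ℕ, j < ℓ → ℓ ≤ j + n → Ydraw ζ B z ℓ ω = 0} := by
  obtain ⟨m, hm1, hνm⟩ := exists_pos_support hν0
  set g' : ℕ → ℕ := fun i => if hi : i < j then g ⟨i, hi⟩ else 1 with hg'def
  have hg' : ∀ i, 1 ≤ g' i := by
    intro i
    by_cases hi : i < j
    · simp only [hg'def, dif_pos hi]; exact hg _
    · simp only [hg'def, dif_neg hi]; omega
  set S := cumG g' j with hSdef
  set T := S + z with hTdef
  have hjS : j ≤ S := cumG_ge hg' j
  have hT1 : 1 ≤ T := by omega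
  have hTm : T ≤ T * m := Nat.le_mul_of_pos_right T (by omega)
  have hb : ∀ t, 1 ≤ t → sched g' j t ≤ t * m := by
    intro t ht
    by_cases htS : t ≤ S
    · have h2 := (sched_pos hg' ht htS).2.1
      calc sched g' j t ≤ t := h2
        _ ≤ t * m := Nat.le_mul_of_pos_right t (by omega)
    · rw [sched_of_gt (by omega)]; omega
  refine ⟨T * m - j, ?_⟩
  have hpos := h.cylinder_pos hρ hm1 hνm (sched g' j) hb T
  refine lt_of_lt_of_le hpos (measure_mono ?_)
  intro ω hω
  simp only [Set.mem_iInter] at hω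
  have hωζ : ∀ t, 1 ≤ t → t ≤ T → ζ t ω = m :=
    fun t h1 h2 => (hω t (Finset.mem_Icc.2 ⟨h1, h2⟩)).1
  have hωB : ∀ t, 1 ≤ t → t ≤ T → B t ω = sched g' j t :=
    fun t h1 h2 => (hω t (Finset.mem_Icc.2 ⟨h1, h2⟩)).2
  have hzcT : zeroCount B T ω = z := by
    unfold zeroCount
    have hfil : (Finset.Icc 1 T).filter (fun i => B i ω = 0) = Finset.Icc (S+1) T := by
      ext t
      simp only [Finset.mem_filter, Finset.mem_Icc]
      constructor
      · rintro ⟨⟨h1, h2⟩, h3⟩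
        rw [hωB t h1 h2] at h3
        have := (sched_zero_iff hg' h1).1 h3
        exact ⟨by omega, h2⟩
      · rintro ⟨h1, h2⟩
        have ht1 : 1 ≤ t := by omega
        refine ⟨⟨ht1, h2⟩, ?_⟩
        rw [hωB t ht1 h2]
        exact sched_of_gt (by omega)
    rw [hfil, Nat.card_Icc]
    omega
  have hzclt : ∀ i, i < T → zeroCount B i ω < z := by
    intro i hi
    have hle : zeroCount B i ω ≤ i - S := by
      refine zeroCount_lt_of_le fun t h1 h2 h3 => ?_
      rw [hωB t h1 (by omega)] at h3
      exact (sched_zero_iff hg' h1).1 h3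
    omega
  have hTheta : Theta B z ω = T := Theta_eq (by omega) hT1 hzcT hzclt
  have hNcol : Ncol ζ B z ω = T * m := by
    unfold Ncol urnColors
    rw [hTheta]
    rw [Finset.sum_congr rfl fun t ht => hωζ t (Finset.mem_Icc.1 ht).1 (Finset.mem_Icc.1 ht).2]
    rw [Finset.sum_const, Nat.card_Icc, smul_eq_mul]
    congr 1
  have hYd : ∀ ℓ : ℕ, Ydraw ζ B z ℓ ω
      = ((Finset.Icc 1 T).filter (fun t => sched g' j t = ℓ)).card := by
    intro ℓ
    unfold Ydraw
    rw [hTheta]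
    congr 1
    refine Finset.filter_congr fun t ht => ?_
    rw [Finset.mem_Icc] at ht
    simp [hωB t ht.1 ht.2]
  refine ⟨by rw [hNcol]; omega, fun i => ?_, fun ℓ hℓ1 hℓ2 => ?_⟩
  · rw [hYd]
    have hST : cumG g' j ≤ T := by rw [← hSdef]; omega
    have hc := sched_count hg' (ℓ := (i : ℕ) + 1) (by omega)
      (Nat.succ_le_of_lt i.isLt) hST
    rw [hc]
    simp only [Nat.add_sub_cancel, hg'def]
    rw [dif_pos i.isLt]
  · rw [hYd]
    exact sched_count_gt hg' (by omega) T

end PartTwo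

section Rec
variable {ρ : ℝ} {ν : PMF ℕ} {P : Measure Ω} {ζ B : ℕ → Ω → ℕ}

lemma IsUrn.block_run_bound (h : IsUrn ρ ν P ζ B) (hρ : 0 < ρ)
    (s c0 M T : ℕ) {G : Set Ω} (hG : MeasurableSet[urnPast ζ B s] G)
    (hGc : G ⊆ {ω | urnColors ζ s ω = c0}) :
    ∀ i, i ≤ T → P (G ∩ {ω | ∀ t, s < t → t ≤ s+i → B t ω ≠ 0}
        ∩ {ω | ∑ t ∈ Finset.Icc (s+1) (s+i), (ζ t ω - M) ≤ M*T})
      ≤ ENNReal.ofReal (1 - ρ/(ρ + (c0 + 2*M*T : ℕ)))^i * P G := by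
  intro i
  induction i with
  | zero =>
    intro _
    rw [pow_zero, one_mul]
    exact measure_mono (Set.inter_subset_left.trans Set.inter_subset_left)
  | succ i ih =>
    intro hsi
    have hiT : i ≤ T := by omega
    have IH := ih hiT
    set L : ℕ := c0 + 2*M*T with hL
    set Di : Set Ω := G ∩ {ω | ∀ t, s < t → t ≤ s+i → B t ω ≠ 0}
        ∩ {ω | ∑ t ∈ Finset.Icc (s+1) (s+i), (ζ t ω - M) ≤ M*T} with hDi
    set H : Set Ω := Di ∩ {ω | ∑ t ∈ Finset.Icc (s+1) (s+i+1), (ζ t ω - M) ≤ M*T} with hH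
    have hmono_sum : ∀ ω : Ω, ∑ t ∈ Finset.Icc (s+1) (s+i), (ζ t ω - M)
        ≤ ∑ t ∈ Finset.Icc (s+1) (s+i+1), (ζ t ω - M) := fun ω =>
      Finset.sum_le_sum_of_subset (Finset.Icc_subset_Icc_right (by omega))
    have hsub1 : G ∩ {ω | ∀ t, s < t → t ≤ s+(i+1) → B t ω ≠ 0}
        ∩ {ω | ∑ t ∈ Finset.Icc (s+1) (s+(i+1)), (ζ t ω - M) ≤ M*T}
        ⊆ H ∩ {ω | ¬ B (s+i+1) ω = 0} := by
      rintro ω ⟨⟨hGω, hno⟩, hex⟩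
      have hex' : ∑ t ∈ Finset.Icc (s+1) (s+i+1), (ζ t ω - M) ≤ M*T := by
        have : s+(i+1) = s+i+1 := by omega
        rwa [this] at hex
      exact ⟨⟨⟨⟨hGω, fun t ht1 ht2 => hno t ht1 (by omega)⟩,
        le_trans (hmono_sum ω) hex'⟩, hex'⟩, hno (s+i+1) (by omega) (by omega)⟩
    -- measurability of H w.r.t. urnHist (s+i+1)
    have hDimeas : MeasurableSet[urnPast ζ B (s+i)] Di := by
      refine MeasurableSet.inter (MeasurableSet.inter ?_ ?_) ?_
      · exact urnPast_mono (by omega) _ hG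
      · have : {ω : Ω | ∀ t, s < t → t ≤ s+i → B t ω ≠ 0}
            = ⋂ t ∈ Finset.Icc (s+1) (s+i), (B t ⁻¹' {0})ᶜ := by
          ext ω
          simp only [Set.mem_iInter, Set.mem_compl_iff, Set.mem_preimage,
            Set.mem_singleton_iff, Set.mem_setOf_eq, Finset.mem_Icc]
          constructor
          · intro hw t ht; exact hw t (by omega) (by omega)
          · intro hw t h1 h2; exact hw t ⟨by omega, by omega⟩
        rw [this]
        refine Finset.measurableSet_biInter _ fun t ht => ?_
        rw [Finset.mem_Icc] at ht
        exact (measurableSet_B (by omega) (by omega) {0}).compl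
      · have hf : Measurable[urnPast ζ B (s+i)]
            (fun ω => ∑ t ∈ Finset.Icc (s+1) (s+i), (ζ t ω - M)) := by
          refine Finset.measurable_sum _ fun t ht => ?_
          rw [Finset.mem_Icc] at ht
          exact (measurable_zeta_urnPast (by omega) (by omega)).sub measurable_const
        exact hf measurableSet_Iic
    have hHmeas : MeasurableSet[urnHist ζ B (s+i+1)] H := by
      refine MeasurableSet.inter ?_ ?_
      · exact le_sup_left (α := MeasurableSpace Ω) _ hDimeas
      · have hf : Measurable[urnHist ζ B (s+i+1)]
            (fun ω => ∑ t ∈ Finset.Icc (s+1) (s+i+1), (ζ t ω - M)) := by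
          refine Finset.measurable_sum _ fun t ht => ?_
          rw [Finset.mem_Icc] at ht
          rcases Nat.lt_or_ge t (s+i+1) with hlt | hge
          · refine Measurable.sub ?_ measurable_const
            refine Measurable.mono
              (measurable_zeta_urnPast (B := B) (n := s+i) (by omega) (by omega)) ?_ le_rfl
            exact le_sup_left
          · have : t = s+i+1 := by omega
            subst this
            refine Measurable.sub ?_ measurable_const
            exact fun _ _ => le_sup_right (α := MeasurableSpace Ω) _ ⟨_, trivial, rfl⟩
        exact hf measurableSet_Iic
    have hHsub : ∀ ω ∈ H, urnColors ζ (s+i+1) ω ≤ L := by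
      intro ω hω
      have hc0 : urnColors ζ s ω = c0 := hGc hω.1.1.1
      have hsplit := urnColors_split (show s ≤ s+i+1 by omega) ζ ω
      have hbound : ∑ t ∈ Finset.Icc (s+1) (s+i+1), ζ t ω
          ≤ M*(i+1) + ∑ t ∈ Finset.Icc (s+1) (s+i+1), (ζ t ω - M) := by
        calc ∑ t ∈ Finset.Icc (s+1) (s+i+1), ζ t ω
            ≤ ∑ t ∈ Finset.Icc (s+1) (s+i+1), (M + (ζ t ω - M)) :=
              Finset.sum_le_sum fun t _ => by omega
          _ = M*(i+1) + ∑ t ∈ Finset.Icc (s+1) (s+i+1), (ζ t ω - M) := by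
              rw [Finset.sum_add_distrib, Finset.sum_const, Nat.card_Icc, smul_eq_mul]
              congr 1
              have hcard : s+i+1+1 - (s+1) = i+1 := by omega
              rw [hcard, Nat.mul_comm]
      have hex2 : ∑ t ∈ Finset.Icc (s+1) (s+i+1), (ζ t ω - M) ≤ M*T := hω.2
      rw [hsplit, hc0, hL]
      have hMi : M*(i+1) ≤ M*T := Nat.mul_le_mul_left M (by omega)
      have h2MT : 2*M*T = M*T + M*T := by ring
      omega
    calc P (G ∩ {ω | ∀ t, s < t → t ≤ s+(i+1) → B t ω ≠ 0}
        ∩ {ω | ∑ t ∈ Finset.Icc (s+1) (s+(i+1)), (ζ t ω - M) ≤ M*T})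
        ≤ P (H ∩ {ω | ¬ B (s+i+1) ω = 0}) := measure_mono hsub1
      _ ≤ ENNReal.ofReal (1 - ρ/(ρ + L)) * P H :=
          h.draw_ne_zero_le hρ (by omega) L hHmeas hHsub
      _ ≤ ENNReal.ofReal (1 - ρ/(ρ + L)) * P Di :=
          mul_le_mul_right (measure_mono Set.inter_subset_left) _
      _ ≤ ENNReal.ofReal (1 - ρ/(ρ + L)) * (ENNReal.ofReal (1 - ρ/(ρ + L))^i * P G) :=
          mul_le_mul_right IH _
      _ = ENNReal.ofReal (1 - ρ/(ρ + L))^(i+1) * P G := by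
          rw [pow_succ]
          ring

lemma IsUrn.no_zero_pow (h : IsUrn ρ ν P ζ B) (hρ : 0 < ρ) {M : ℕ} (hM : 1 ≤ M)
    (hδ : excessMoment ν M ≤ ENNReal.ofReal (ρ/(8*(1+ρ)))) (K : ℕ) :
    ∀ s : ℕ, ∀ G : Set Ω, MeasurableSet[urnPast ζ B s] G →
      P (G ∩ {ω | ∀ t, s < t → B t ω ≠ 0})
        ≤ ENNReal.ofReal (1 - ρ/(2*(2+2*M+ρ)))^K * P G := by
  haveI := h.prob
  induction K with
  | zero =>
    intro s G hG
    rw [pow_zero, one_mul]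
    exact measure_mono Set.inter_subset_left
  | succ K ih =>
    intro s G hG
    have hGm : MeasurableSet G := h.urnPast_le s _ hG
    set β : ℝ := ρ/(2*(2+2*M+ρ)) with hβ
    have hMR : (1:ℝ) ≤ (M:ℝ) := by exact_mod_cast hM
    have hβpos : 0 < β := by rw [hβ]; positivity
    have h2β : 1 - 2*β = (2+2*(M:ℝ))/(2+2*M+ρ) := by
      rw [hβ]; field_simp; ring
    have h2βnn : 0 ≤ 1 - 2*β := by rw [h2β]; positivity
    have hAmeas : ∀ u : ℕ, MeasurableSet {ω | ∀ t, u < t → B t ω ≠ 0} := by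
      intro u
      have : {ω : Ω | ∀ t, u < t → B t ω ≠ 0} = ⋂ t : ℕ, (B t) ⁻¹' {x | u < t → x ≠ 0} := by
        ext ω; simp only [Set.mem_iInter, Set.mem_preimage, Set.mem_setOf_eq]
      rw [this]
      exact MeasurableSet.iInter fun t => h.measB t (by trivial)
    have key : ∀ c0 : ℕ, P ((G ∩ {ω | urnColors ζ s ω = c0}) ∩ {ω | ∀ t, s < t → B t ω ≠ 0})
        ≤ ENNReal.ofReal (1-β)^(K+1) * P (G ∩ {ω | urnColors ζ s ω = c0}) := by
      intro c0
      set T : ℕ := c0 + Nat.ceil ρ + 1 with hT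
      set Gc0 : Set Ω := G ∩ {ω | urnColors ζ s ω = c0} with hGc0
      have hGc0meas : MeasurableSet[urnPast ζ B s] Gc0 :=
        hG.inter (measurable_urnColors_urnPast (measurableSet_singleton c0))
      have hGc0m : MeasurableSet Gc0 := h.urnPast_le s _ hGc0meas
      set A1 : Set Ω := {ω | ∀ t, s < t → t ≤ s+T → B t ω ≠ 0} with hA1
      set E1 : Set Ω := {ω | ∑ t ∈ Finset.Icc (s+1) (s+T), (ζ t ω - M) ≤ M*T} with hE1
      set E2 : Set Ω := {ω | M*T+1 ≤ ∑ t ∈ Finset.Icc (s+1) (s+T), (ζ t ω - M)} with hE2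
      set G1 : Set Ω := Gc0 ∩ A1 ∩ E1 with hG1
      set G2 : Set Ω := Gc0 ∩ E2 with hG2
      -- measurability in urnPast (s+T)
      have hexm : Measurable[urnPast ζ B (s+T)]
          (fun ω => ∑ t ∈ Finset.Icc (s+1) (s+T), (ζ t ω - M)) := by
        refine Finset.measurable_sum _ fun t ht => ?_
        rw [Finset.mem_Icc] at ht
        exact (measurable_zeta_urnPast (by omega) (by omega)).sub measurable_const
      have hA1meas : MeasurableSet[urnPast ζ B (s+T)] A1 := by
        have : A1 = ⋂ t ∈ Finset.Icc (s+1) (s+T), (B t ⁻¹' {0})ᶜ := by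
          ext ω
          simp only [hA1, Set.mem_iInter, Set.mem_compl_iff, Set.mem_preimage,
            Set.mem_singleton_iff, Set.mem_setOf_eq, Finset.mem_Icc]
          constructor
          · intro hw t ht; exact hw t (by omega) (by omega)
          · intro hw t h1 h2; exact hw t ⟨by omega, by omega⟩
        rw [this]
        refine Finset.measurableSet_biInter _ fun t ht => ?_
        rw [Finset.mem_Icc] at ht
        exact (measurableSet_B (by omega) (by omega) {0}).compl
      have hG1meas : MeasurableSet[urnPast ζ B (s+T)] G1 :=
        ((urnPast_mono (by omega) _ hGc0meas).inter hA1meas).inter (hexm measurableSet_Iic)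
      have hG2meas : MeasurableSet[urnPast ζ B (s+T)] G2 :=
        (urnPast_mono (by omega) _ hGc0meas).inter (hexm measurableSet_Ici)
      -- inclusion
      have hsub : Gc0 ∩ {ω | ∀ t, s < t → B t ω ≠ 0}
          ⊆ (G1 ∩ {ω | ∀ t, s+T < t → B t ω ≠ 0}) ∪ (G2 ∩ {ω | ∀ t, s+T < t → B t ω ≠ 0}) := by
        rintro ω ⟨hg, ha⟩
        have hafter : ω ∈ {ω : Ω | ∀ t, s+T < t → B t ω ≠ 0} :=
          fun t ht => ha t (by omega)
        rcases le_or_gt (∑ t ∈ Finset.Icc (s+1) (s+T), (ζ t ω - M)) (M*T) with hex | hex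
        · exact Or.inl ⟨⟨⟨hg, fun t ht1 _ => ha t ht1⟩, hex⟩, hafter⟩
        · exact Or.inr ⟨⟨hg, hex⟩, hafter⟩
      -- real-number estimates
      set L : ℕ := c0 + 2*M*T with hL
      set x : ℝ := ρ/(ρ + (L:ℝ)) with hx
      have hLnn : (0:ℝ) ≤ (L:ℝ) := Nat.cast_nonneg L
      have hx0 : 0 ≤ x := by rw [hx]; positivity
      have hx1 : x ≤ 1 := by
        rw [hx, div_le_one (by positivity)]
        linarith
      have hTge : (c0:ℝ) + ρ ≤ 2*(T:ℝ) := by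
        have hc := Nat.le_ceil ρ
        have : (T:ℝ) = (c0:ℝ) + (Nat.ceil ρ : ℝ) + 1 := by rw [hT]; push_cast; ring
        rw [this]
        have hc0 : (0:ℝ) ≤ (c0:ℝ) := Nat.cast_nonneg c0
        linarith
      have hkey : ρ + (L:ℝ) ≤ (T:ℝ)*(2+2*(M:ℝ)) := by
        have hcast : (L:ℝ) = (c0:ℝ) + 2*((M:ℝ)*(T:ℝ)) := by rw [hL]; push_cast; ring
        have hexp : (T:ℝ)*(2+2*(M:ℝ)) = 2*(T:ℝ) + 2*((M:ℝ)*(T:ℝ)) := by ring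
        rw [hcast, hexp]
        linarith
      have hTx : ρ/(2+2*(M:ℝ)) ≤ (T:ℝ) * x := by
        rw [hx, mul_div_assoc']
        rw [div_le_div_iff₀ (by positivity) (by positivity)]
        nlinarith [mul_le_mul_of_nonneg_left hkey hρ.le]
      have hpow : (1 - x)^T ≤ 1 - 2*β := by
        have h1 := real_pow_le_inv hx0 hx1 (a := ρ/(2+2*(M:ℝ))) (by positivity) hTx
        have h2 : 1/(1 + ρ/(2+2*(M:ℝ))) = 1 - 2*β := by
          rw [h2β]; field_simp
        rw [h2] at h1
        exact h1
      -- G1 bound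
      have hblock := h.block_run_bound hρ s c0 M T hGc0meas Set.inter_subset_right T le_rfl
      have hG1bound : P G1 ≤ ENNReal.ofReal (1-2*β) * P Gc0 := by
        refine le_trans hblock ?_
        refine mul_le_mul_left ?_ _
        rw [← ENNReal.ofReal_pow (by linarith)]
        exact ENNReal.ofReal_le_ofReal hpow
      -- G2 bound
      have hδβ : excessMoment ν M ≤ ENNReal.ofReal β * (M:ℝ≥0∞) := by
        refine le_trans hδ ?_
        rw [← ENNReal.ofReal_natCast M, ← ENNReal.ofReal_mul hβpos.le]
        refine ENNReal.ofReal_le_ofReal ?_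
        rw [hβ, div_mul_eq_mul_div, div_le_div_iff₀ (by positivity) (by positivity)]
        have h1 : ρ ≤ (M:ℝ)*ρ := by nlinarith [hρ.le, hMR]
        have h2 : ρ*ρ ≤ (M:ℝ)*ρ*ρ := by nlinarith [hρ.le, hMR, h1]
        nlinarith [h1, h2, hρ.le]
      have hmarkov := h.excess_bound M s T hGc0meas
      have hG2bound : P G2 ≤ ENNReal.ofReal β * P Gc0 := by
        have hc1 : (↑(M*T+1) : ℝ≥0∞) * P G2
            ≤ (↑(M*T+1) : ℝ≥0∞) * (ENNReal.ofReal β * P Gc0) := by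
          refine le_trans hmarkov ?_
          calc (T : ℝ≥0∞) * excessMoment ν M * P Gc0
              ≤ (T : ℝ≥0∞) * (ENNReal.ofReal β * (M:ℝ≥0∞)) * P Gc0 := by
                exact mul_le_mul_left (mul_le_mul_right hδβ _) _
            _ = ENNReal.ofReal β * ((M:ℝ≥0∞) * (T:ℝ≥0∞)) * P Gc0 := by ring
            _ ≤ ENNReal.ofReal β * (↑(M*T+1) : ℝ≥0∞) * P Gc0 := by
                refine mul_le_mul_left (mul_le_mul_right ?_ _) _
                push_cast
                exact le_add_of_le_of_nonneg le_rfl zero_le_one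
            _ = (↑(M*T+1) : ℝ≥0∞) * (ENNReal.ofReal β * P Gc0) := by ring
        have hne0 : (↑(M*T+1) : ℝ≥0∞) ≠ 0 := by
          simp
        have hnetop : (↑(M*T+1) : ℝ≥0∞) ≠ ⊤ := ENNReal.natCast_ne_top _
        exact (ENNReal.mul_le_mul_iff_right hne0 hnetop).1 hc1
      -- combine
      calc P (Gc0 ∩ {ω | ∀ t, s < t → B t ω ≠ 0})
          ≤ P ((G1 ∩ {ω | ∀ t, s+T < t → B t ω ≠ 0})
              ∪ (G2 ∩ {ω | ∀ t, s+T < t → B t ω ≠ 0})) := measure_mono hsub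
        _ ≤ P (G1 ∩ {ω | ∀ t, s+T < t → B t ω ≠ 0})
            + P (G2 ∩ {ω | ∀ t, s+T < t → B t ω ≠ 0}) := measure_union_le _ _
        _ ≤ ENNReal.ofReal (1-β)^K * P G1 + ENNReal.ofReal (1-β)^K * P G2 := by
            exact add_le_add (ih (s+T) G1 hG1meas) (ih (s+T) G2 hG2meas)
        _ ≤ ENNReal.ofReal (1-β)^K * (ENNReal.ofReal (1-2*β) * P Gc0)
            + ENNReal.ofReal (1-β)^K * (ENNReal.ofReal β * P Gc0) := by
            exact add_le_add (mul_le_mul_right hG1bound _) (mul_le_mul_right hG2bound _)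
        _ = ENNReal.ofReal (1-β)^K * ((ENNReal.ofReal (1-2*β) + ENNReal.ofReal β) * P Gc0) := by
            ring
        _ = ENNReal.ofReal (1-β)^(K+1) * P Gc0 := by
            rw [← ENNReal.ofReal_add h2βnn hβpos.le]
            have : 1 - 2*β + β = 1 - β := by ring
            rw [this, pow_succ]
            ring
    -- sum over c0
    calc P (G ∩ {ω | ∀ t, s < t → B t ω ≠ 0})
        = ∑' c0 : ℕ, P ((G ∩ {ω | ∀ t, s < t → B t ω ≠ 0}) ∩ {ω | urnColors ζ s ω = c0}) :=
          measure_partition_urnColors h s (hGm.inter (hAmeas s))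
      _ ≤ ∑' c0 : ℕ, ENNReal.ofReal (1-β)^(K+1) * P (G ∩ {ω | urnColors ζ s ω = c0}) := by
          refine ENNReal.tsum_le_tsum fun c0 => ?_
          rw [Set.inter_right_comm]
          exact key c0
      _ = ENNReal.ofReal (1-β)^(K+1) * ∑' c0 : ℕ, P (G ∩ {ω | urnColors ζ s ω = c0}) :=
          ENNReal.tsum_mul_left
      _ = ENNReal.ofReal (1-β)^(K+1) * P G := by
          rw [← measure_partition_urnColors h s hGm]

lemma IsUrn.rec_zero (h : IsUrn ρ ν P ζ B) (hρ : 0 < ρ) (hnubar : nubar ν < ⊤) (s : ℕ) :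
    P {ω | ∀ t, s < t → B t ω ≠ 0} = 0 := by
  haveI := h.prob
  have hε : (0:ℝ≥0∞) < ENNReal.ofReal (ρ/(8*(1+ρ))) := by
    rw [ENNReal.ofReal_pos]
    positivity
  obtain ⟨M, hM, hδ⟩ := exists_truncation hnubar hε
  have hbase : ∀ K, P {ω | ∀ t, s < t → B t ω ≠ 0}
      ≤ ENNReal.ofReal (1 - ρ/(2*(2+2*M+ρ)))^K := by
    intro K
    have := h.no_zero_pow hρ hM hδ K s Set.univ MeasurableSet.univ
    rwa [Set.univ_inter, measure_univ, mul_one] at this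
  have hMR : (1:ℝ) ≤ (M:ℝ) := by exact_mod_cast hM
  have hβpos : 0 < ρ/(2*(2+2*(M:ℝ)+ρ)) := by positivity
  have hr : ENNReal.ofReal (1 - ρ/(2*(2+2*M+ρ))) < 1 := by
    rw [← ENNReal.ofReal_one]
    refine ENNReal.ofReal_lt_ofReal_iff (by norm_num) |>.2 ?_
    linarith
  have htend := ENNReal.tendsto_pow_atTop_nhds_zero_of_lt_one hr
  refine le_antisymm ?_ (zero_le)
  exact ge_of_tendsto htend (Filter.Eventually.of_forall hbase)

end Rec


section LemA
variable {ρ : ℝ} {ν : PMF ℕ} {P : Measure Ω} {ζ B : ℕ → Ω → ℕ}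

/-- Competition lemma: starting just after time `s`, with `c` a present color, the first
draw in `{0, c}` is `c` with conditional probability `1/(1+ρ)` and `0` with `ρ/(1+ρ)`. -/
lemma IsUrn.first_draw (h : IsUrn ρ ν P ζ B) (hρ : 0 < ρ) (hnubar : nubar ν < ⊤)
    (s c : ℕ) (hc : 1 ≤ c) {G : Set Ω} (hGm : MeasurableSet[urnHist ζ B (s+1)] G)
    (hGc : ∀ ω ∈ G, c ≤ urnColors ζ (s+1) ω) :
    ENNReal.ofReal (1/(1+ρ)) * P G ≤
      (∑' t : ℕ, P ((G ∩ {ω | ∀ i, s < i → i < s+1+t → (B i ω ≠ 0 ∧ B i ω ≠ c)})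
        ∩ {ω | B (s+1+t) ω = c}))
    ∧
    ENNReal.ofReal (ρ/(1+ρ)) * P G ≤
      (∑' t : ℕ, P ((G ∩ {ω | ∀ i, s < i → i < s+1+t → (B i ω ≠ 0 ∧ B i ω ≠ c)})
        ∩ {ω | B (s+1+t) ω = 0})) := by
  haveI := h.prob
  set D : ℕ → Set Ω := fun t => G ∩ {ω | ∀ i, s < i → i < t → (B i ω ≠ 0 ∧ B i ω ≠ c)}
    with hD
  have hGamb : MeasurableSet G := h.urnHist_le (s+1) _ hGm
  have hDamb : ∀ t, MeasurableSet (D t) := by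
    intro t
    refine hGamb.inter ?_
    have : {ω : Ω | ∀ i, s < i → i < t → (B i ω ≠ 0 ∧ B i ω ≠ c)}
        = ⋂ i : ℕ, (B i) ⁻¹' {x | s < i → i < t → (x ≠ 0 ∧ x ≠ c)} := by
      ext ω; simp only [Set.mem_iInter, Set.mem_preimage, Set.mem_setOf_eq]
    rw [this]
    exact MeasurableSet.iInter fun i => h.measB i (by trivial)
  have hDmeas : ∀ t, s+1 ≤ t → MeasurableSet[urnHist ζ B t] (D t) := by
    intro t ht
    refine MeasurableSet.inter (urnHist_mono (by omega) ht _ hGm) ?_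
    have heq : {ω : Ω | ∀ i, s < i → i < t → (B i ω ≠ 0 ∧ B i ω ≠ c)}
        = ⋂ i ∈ Finset.Ico (s+1) t, ((B i ⁻¹' {0})ᶜ ∩ (B i ⁻¹' {c})ᶜ) := by
      ext ω
      simp only [Set.mem_iInter, Set.mem_inter_iff, Set.mem_compl_iff, Set.mem_preimage,
        Set.mem_singleton_iff, Set.mem_setOf_eq, Finset.mem_Ico]
      constructor
      · intro hw i hi; exact hw i (by omega) (by omega)
      · intro hw i h1 h2; exact hw i ⟨by omega, by omega⟩
    rw [heq]
    refine le_sup_left (α := MeasurableSpace Ω) _ ?_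
    refine Finset.measurableSet_biInter _ fun i hi => ?_
    rw [Finset.mem_Ico] at hi
    exact ((measurableSet_B (by omega) (by omega : i ≤ t - 1) {0}).compl).inter
      ((measurableSet_B (by omega) (by omega) {c}).compl)
  have hDsub : ∀ t, s+1 ≤ t → ∀ ω ∈ D t, c ≤ urnColors ζ t ω := by
    intro t ht ω hω
    exact le_trans (hGc ω hω.1) (urnColors_mono ht ω)
  have hratio : ∀ t : ℕ, P (D (s+1+t) ∩ {ω | B (s+1+t) ω = 0})
      = ENNReal.ofReal ρ * P (D (s+1+t) ∩ {ω | B (s+1+t) ω = c}) := by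
    intro t
    exact h.draw_ratio hρ.le (by omega) hc (hDmeas (s+1+t) (by omega))
      (hDsub (s+1+t) (by omega))
  set X : ℝ≥0∞ := ∑' t : ℕ, P (D (s+1+t) ∩ {ω | B (s+1+t) ω = c}) with hX
  set Y : ℝ≥0∞ := ∑' t : ℕ, P (D (s+1+t) ∩ {ω | B (s+1+t) ω = 0}) with hY
  have hYX : Y = ENNReal.ofReal ρ * X := by
    rw [hY, hX, ← ENNReal.tsum_mul_left]
    exact tsum_congr hratio
  -- coverage
  have hcover : G ⊆ (⋃ t : ℕ, ((D (s+1+t) ∩ {ω | B (s+1+t) ω = c})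
      ∪ (D (s+1+t) ∩ {ω | B (s+1+t) ω = 0}))) ∪ {ω | ∀ t', s < t' → B t' ω ≠ 0} := by
    intro ω hω
    by_cases hz : ∀ t', s < t' → B t' ω ≠ 0
    · exact Or.inr hz
    push_neg at hz
    obtain ⟨t', ht', hBt'⟩ := hz
    have hne : {u : ℕ | s < u ∧ (B u ω = 0 ∨ B u ω = c)}.Nonempty :=
      ⟨t', ht', Or.inl hBt'⟩
    set u := sInf {u : ℕ | s < u ∧ (B u ω = 0 ∨ B u ω = c)} with hu
    have hmem := Nat.sInf_mem hne
    have hmin : ∀ i, s < i → i < u → (B i ω ≠ 0 ∧ B i ω ≠ c) := by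
      intro i h1 h2
      have := Nat.notMem_of_lt_sInf (hu ▸ h2)
      simp only [Set.mem_setOf_eq, not_and, not_or] at this
      exact this h1
    have hus : s + 1 ≤ u := hmem.1
    refine Or.inl (Set.mem_iUnion.2 ⟨u - (s+1), ?_⟩)
    have huu : s + 1 + (u - (s+1)) = u := by omega
    rw [huu]
    rcases hmem.2 with h0 | hcc
    · exact Or.inr ⟨⟨hω, hmin⟩, h0⟩
    · exact Or.inl ⟨⟨hω, hmin⟩, hcc⟩
  have hdisj : Pairwise (Function.onFun Disjoint (fun t : ℕ =>
      (D (s+1+t) ∩ {ω | B (s+1+t) ω = c}) ∪ (D (s+1+t) ∩ {ω | B (s+1+t) ω = 0}))) := by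
    intro t t' htt'
    wlog hlt : t < t' generalizing t t'
    · exact (this htt'.symm (by omega)).symm
    simp only [Function.onFun]
    refine Set.disjoint_left.2 ?_
    rintro ω hω hω'
    have hBval : B (s+1+t) ω = c ∨ B (s+1+t) ω = 0 := by
      rcases hω with h1 | h1
      · exact Or.inl h1.2
      · exact Or.inr h1.2
    have hD' : ω ∈ D (s+1+t') := by
      rcases hω' with h1 | h1
      · exact h1.1
      · exact h1.1
    have := hD'.2 (s+1+t) (by omega) (by omega)
    rcases hBval with h1 | h1
    · exact this.2 h1
    · exact this.1 h1
  have hXYsum : P G ≤ X + Y := by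
    have hmeasU : ∀ t : ℕ, MeasurableSet ((D (s+1+t) ∩ {ω | B (s+1+t) ω = c})
        ∪ (D (s+1+t) ∩ {ω | B (s+1+t) ω = 0})) := by
      intro t
      have hBc : MeasurableSet {ω | B (s+1+t) ω = c} :=
        h.measB _ (measurableSet_singleton c)
      have hB0 : MeasurableSet {ω | B (s+1+t) ω = 0} :=
        h.measB _ (measurableSet_singleton 0)
      exact ((hDamb _).inter hBc).union ((hDamb _).inter hB0)
    calc P G ≤ P ((⋃ t : ℕ, ((D (s+1+t) ∩ {ω | B (s+1+t) ω = c})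
          ∪ (D (s+1+t) ∩ {ω | B (s+1+t) ω = 0}))) ∪ {ω | ∀ t', s < t' → B t' ω ≠ 0}) :=
          measure_mono hcover
      _ ≤ P (⋃ t : ℕ, ((D (s+1+t) ∩ {ω | B (s+1+t) ω = c})
          ∪ (D (s+1+t) ∩ {ω | B (s+1+t) ω = 0}))) + P {ω | ∀ t', s < t' → B t' ω ≠ 0} :=
          measure_union_le _ _
      _ = P (⋃ t : ℕ, ((D (s+1+t) ∩ {ω | B (s+1+t) ω = c})
          ∪ (D (s+1+t) ∩ {ω | B (s+1+t) ω = 0}))) := by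
          rw [h.rec_zero hρ hnubar s, add_zero]
      _ = ∑' t : ℕ, P ((D (s+1+t) ∩ {ω | B (s+1+t) ω = c})
          ∪ (D (s+1+t) ∩ {ω | B (s+1+t) ω = 0})) := measure_iUnion hdisj hmeasU
      _ ≤ ∑' t : ℕ, (P (D (s+1+t) ∩ {ω | B (s+1+t) ω = c})
          + P (D (s+1+t) ∩ {ω | B (s+1+t) ω = 0})) :=
          ENNReal.tsum_le_tsum fun t => measure_union_le _ _
      _ = X + Y := ENNReal.tsum_add
  have h1ρ : (0:ℝ) < 1 + ρ := by linarith
  have hmain : P G ≤ ENNReal.ofReal (1+ρ) * X := by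
    rw [ENNReal.ofReal_add zero_le_one hρ.le, ENNReal.ofReal_one, add_mul, one_mul]
    rw [← hYX]
    exact hXYsum
  have hXbound : ENNReal.ofReal (1/(1+ρ)) * P G ≤ X := by
    calc ENNReal.ofReal (1/(1+ρ)) * P G
        ≤ ENNReal.ofReal (1/(1+ρ)) * (ENNReal.ofReal (1+ρ) * X) :=
          mul_le_mul_right hmain _
      _ = ENNReal.ofReal ((1/(1+ρ)) * (1+ρ)) * X := by
          rw [ENNReal.ofReal_mul (by positivity), mul_assoc]
      _ = X := by
          rw [one_div_mul_cancel (by linarith), ENNReal.ofReal_one, one_mul]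
  refine ⟨hXbound, ?_⟩
  calc ENNReal.ofReal (ρ/(1+ρ)) * P G
      = ENNReal.ofReal ρ * (ENNReal.ofReal (1/(1+ρ)) * P G) := by
        rw [← mul_assoc, ← ENNReal.ofReal_mul hρ.le]
        congr 2
        field_simp
    _ ≤ ENNReal.ofReal ρ * X := mul_le_mul_right hXbound _
    _ = Y := hYX.symm

end LemA


section PartThreeAux
variable {ρ : ℝ} {ν : PMF ℕ} {P : Measure Ω} {ζ B : ℕ → Ω → ℕ} {ω : Ω}

lemma zeroCount_zero (B : ℕ → Ω → ℕ) (ω : Ω) : zeroCount B 0 ω = 0 := by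
  simp [zeroCount]

lemma measurable_zeroCount_urnPast {i n : ℕ} (hin : i ≤ n) :
    Measurable[urnPast ζ B n] (zeroCount B i) := by
  have hrw : zeroCount B i = fun ω => ∑ j ∈ Finset.Icc 1 i, (if B j ω = 0 then 1 else 0) := by
    funext ω
    rw [zeroCount, Finset.card_filter]
  rw [hrw]
  refine Finset.measurable_sum _ fun j hj => ?_
  rw [Finset.mem_Icc] at hj
  have hBj : Measurable[urnPast ζ B n] (B j) := measurable_B_urnPast hj.1 (by omega)
  exact Measurable.comp (measurable_from_top (f := fun b : ℕ => if b = 0 then (1:ℕ) else 0)) hBj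

lemma Tset_meas (k s : ℕ) :
    MeasurableSet[urnPast ζ B s] {ω | Theta B k ω = s ∧ zeroCount B s ω = k} := by
  by_cases hk : k = 0
  · subst hk
    by_cases hs : s = 0
    · subst hs
      have : {ω : Ω | Theta B 0 ω = 0 ∧ zeroCount B 0 ω = 0} = Set.univ := by
        ext ω
        simp [theta_zero, zeroCount_zero]
      rw [this]
      exact @MeasurableSet.univ Ω (urnPast ζ B 0)
    · have hemp : {ω : Ω | Theta B 0 ω = s ∧ zeroCount B s ω = 0} = ∅ := by
        ext ω
        simp only [Set.mem_setOf_eq, Set.mem_empty_iff_false, iff_false, not_and]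
        intro h1
        exact absurd (by rw [← h1, theta_zero]) hs
      rw [hemp]
      exact @MeasurableSet.empty Ω (urnPast ζ B s)
  · by_cases hs : s = 0
    · subst hs
      have : {ω : Ω | Theta B k ω = 0 ∧ zeroCount B 0 ω = k} = ∅ := by
        ext ω
        simp only [Set.mem_setOf_eq, Set.mem_empty_iff_false, iff_false, not_and]
        intro _
        rw [zeroCount_zero]
        omega
      rw [this]
      exact @MeasurableSet.empty Ω (urnPast ζ B 0)
    · have hchar : {ω : Ω | Theta B k ω = s ∧ zeroCount B s ω = k}
          = {ω | zeroCount B s ω = k} ∩ ⋂ i ∈ Finset.Ico 1 s, {ω | ¬ zeroCount B i ω = k} := by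
        ext ω
        simp only [Set.mem_setOf_eq, Set.mem_inter_iff, Set.mem_iInter, Finset.mem_Ico]
        constructor
        · rintro ⟨hθ, hzc⟩
          refine ⟨hzc, fun i hi => ?_⟩
          have hpos : 1 ≤ Theta B k ω := by rw [hθ]; omega
          have hmem := Theta_mem hk hpos
          rw [hθ] at hmem
          rcases hmem.2 i (by omega) with hne | h0
          · exact hne
          · omega
        · rintro ⟨hzc, hmin⟩
          refine ⟨?_, hzc⟩
          refine Theta_eq hk (by omega) hzc ?_
          intro i hi
          rcases Nat.eq_zero_or_pos i with rfl | hi1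
          · rw [zeroCount_zero]; omega
          · have hne := hmin i ⟨hi1, hi⟩
            have hle : zeroCount B i ω ≤ zeroCount B s ω := zeroCount_mono (by omega) ω
            omega
      rw [hchar]
      refine MeasurableSet.inter ?_ ?_
      · exact measurable_zeroCount_urnPast le_rfl (measurableSet_singleton k)
      · refine Finset.measurableSet_biInter _ fun i hi => ?_
        rw [Finset.mem_Ico] at hi
        exact (measurable_zeroCount_urnPast (by omega) (measurableSet_singleton k)).compl

lemma zeroCount_hits (n : ℕ) : ∀ k, k ≤ zeroCount B n ω → ∃ m, m ≤ n ∧ zeroCount B m ω = k := by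
  induction n with
  | zero =>
    intro k hk
    rw [zeroCount_zero] at hk
    exact ⟨0, le_rfl, by rw [zeroCount_zero]; omega⟩
  | succ n ih =>
    intro k hk
    rcases le_or_gt k (zeroCount B n ω) with hle | hlt
    · obtain ⟨m, hm, hzc⟩ := ih k hle
      exact ⟨m, by omega, hzc⟩
    · have hsucc := zeroCount_succ (B := B) n ω
      refine ⟨n+1, le_rfl, ?_⟩
      by_cases hb : B (n+1) ω = 0
      · rw [if_pos hb] at hsucc; omega
      · rw [if_neg hb] at hsucc; omega

lemma good_unbounded (hg : ∀ u, ∃ t, u < t ∧ B t ω = 0) :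
    ∀ k, ∃ n, k ≤ zeroCount B n ω := by
  intro k
  induction k with
  | zero => exact ⟨0, by omega⟩
  | succ k ih =>
    obtain ⟨n, hn⟩ := ih
    obtain ⟨t, htn, hBt⟩ := hg n
    refine ⟨t, ?_⟩
    have h1 : zeroCount B n ω ≤ zeroCount B (t-1) ω := zeroCount_mono (by omega) ω
    have h2 := zeroCount_succ (B := B) (t-1) ω
    have ht1 : t - 1 + 1 = t := by omega
    rw [ht1] at h2
    rw [if_pos hBt] at h2
    omega

lemma pairwise_disjoint_fiber {α : Type*} {f : Ω → α} {g : ℕ → α}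
    (hg : Function.Injective g) {S : ℕ → Set Ω} (hS : ∀ n, S n ⊆ {ω | f ω = g n}) :
    Pairwise (Function.onFun Disjoint S) := by
  intro i j hij
  refine Set.disjoint_left.2 fun ω hi hj => ?_
  exact hij (hg ((hS i hi).symm.trans (hS j hj)))

end PartThreeAux


section PartThree
variable {ρ : ℝ} {ν : PMF ℕ} {P : Measure Ω} {ζ B : ℕ → Ω → ℕ}

lemma part_three (h : IsUrn ρ ν P ζ B) (hρ : 0 < ρ) (hν0 : ν 0 < 1) (hnubar : nubar ν < ⊤)
    (z : ℕ) (hz : 1 ≤ z) :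
    ENNReal.ofReal ((1 - (ν 0).toReal) * ρ / (1 + ρ) ^ 2) ≤
      P {ω | ∃ ℓ : ℕ, 1 ≤ ℓ ∧ ℓ ≤ Ncol ζ B z ω ∧ Ydraw ζ B z ℓ ω = 1} := by
  haveI := h.prob
  set W : Set Ω := {ω | ∃ ℓ : ℕ, 1 ≤ ℓ ∧ ℓ ≤ Ncol ζ B z ω ∧ Ydraw ζ B z ℓ ω = 1} with hW
  set Ts : ℕ → Set Ω := fun s => {ω | Theta B (z-1) ω = s ∧ zeroCount B s ω = z-1} with hTs
  set Gs : ℕ → ℕ → Set Ω := fun s c =>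
    (Ts s ∩ ζ (s+1) ⁻¹' {x | 1 ≤ x}) ∩ {ω | urnColors ζ (s+1) ω = c} with hGs
  set F1 : ℕ → ℕ → ℕ → Set Ω := fun s c t1 =>
    (Gs s c ∩ {ω | ∀ i, s < i → i < s+1+t1 → (B i ω ≠ 0 ∧ B i ω ≠ c)})
      ∩ {ω | B (s+1+t1) ω = c} with hF1
  set F2 : ℕ → ℕ → ℕ → ℕ → Set Ω := fun s c t1 t2 =>
    (F1 s c t1 ∩ {ω | ∀ i, s+1+t1 < i → i < (s+1+t1)+1+t2 → (B i ω ≠ 0 ∧ B i ω ≠ c)})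
      ∩ {ω | B ((s+1+t1)+1+t2) ω = 0} with hF2
  -- ambient measurability
  have hTsAmb : ∀ s, MeasurableSet (Ts s) := fun s => h.urnPast_le s _ (Tset_meas (z-1) s)
  have hNoAmb : ∀ c a b : ℕ, MeasurableSet {ω | ∀ i, a < i → i < b → (B i ω ≠ 0 ∧ B i ω ≠ c)} := by
    intro c a b
    have : {ω : Ω | ∀ i, a < i → i < b → (B i ω ≠ 0 ∧ B i ω ≠ c)}
        = ⋂ i : ℕ, (B i) ⁻¹' {x | a < i → i < b → (x ≠ 0 ∧ x ≠ c)} := by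
      ext ω; simp only [Set.mem_iInter, Set.mem_preimage, Set.mem_setOf_eq]
    rw [this]
    exact MeasurableSet.iInter fun i => h.measB i (by trivial)
  have hGsAmb : ∀ s c, MeasurableSet (Gs s c) := fun s c =>
    ((hTsAmb s).inter (h.measζ (s+1) (by trivial))).inter
      (h.meas_urnColors (s+1) (measurableSet_singleton c))
  have hF1Amb : ∀ s c t1, MeasurableSet (F1 s c t1) := fun s c t1 =>
    ((hGsAmb s c).inter (hNoAmb c s (s+1+t1))).inter (h.measB _ (measurableSet_singleton c))
  have hF2Amb : ∀ s c t1 t2, MeasurableSet (F2 s c t1 t2) := fun s c t1 t2 =>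
    ((hF1Amb s c t1).inter (hNoAmb c (s+1+t1) ((s+1+t1)+1+t2))).inter
      (h.measB _ (measurableSet_singleton 0))
  -- sub-σ-algebra measurability
  have hGsMeas : ∀ s c, MeasurableSet[urnHist ζ B (s+1)] (Gs s c) := by
    intro s c
    refine (MeasurableSet.inter ?_ ?_).inter ?_
    · exact le_sup_left (α := MeasurableSpace Ω) _ (Tset_meas (z-1) s)
    · exact le_sup_right (α := MeasurableSpace Ω) _ ⟨{x | 1 ≤ x}, trivial, rfl⟩
    · exact measurable_urnColors_urnHist (by omega) (measurableSet_singleton c)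
  have hGsC : ∀ s c, ∀ ω ∈ Gs s c, c ≤ urnColors ζ (s+1) ω := by
    intro s c ω hω
    exact le_of_eq hω.2.symm
  have hF1Meas : ∀ s c t1, MeasurableSet[urnHist ζ B ((s+1+t1)+1)] (F1 s c t1) := by
    intro s c t1
    refine le_sup_left (α := MeasurableSpace Ω) _ ?_
    show MeasurableSet[urnPast ζ B (s+1+t1)] (F1 s c t1)
    refine (MeasurableSet.inter ?_ ?_).inter ?_
    · exact urnPast_mono (by omega) _ (urnHist_le_urnPast (by omega) _ (hGsMeas s c))
    · have heq : {ω : Ω | ∀ i, s < i → i < s+1+t1 → (B i ω ≠ 0 ∧ B i ω ≠ c)}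
          = ⋂ i ∈ Finset.Ico (s+1) (s+1+t1), ((B i ⁻¹' {0})ᶜ ∩ (B i ⁻¹' {c})ᶜ) := by
        ext ω
        simp only [Set.mem_iInter, Set.mem_inter_iff, Set.mem_compl_iff, Set.mem_preimage,
          Set.mem_singleton_iff, Set.mem_setOf_eq, Finset.mem_Ico]
        constructor
        · intro hw i hi; exact hw i (by omega) (by omega)
        · intro hw i h1 h2; exact hw i ⟨by omega, by omega⟩
      rw [heq]
      refine Finset.measurableSet_biInter _ fun i hi => ?_
      rw [Finset.mem_Ico] at hi
      exact ((measurableSet_B (by omega) (by omega : i ≤ s+1+t1) {0}).compl).inter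
        ((measurableSet_B (by omega) (by omega) {c}).compl)
    · exact measurableSet_B (by omega) le_rfl {c}
  have hF1C : ∀ s c t1, ∀ ω ∈ F1 s c t1, c ≤ urnColors ζ ((s+1+t1)+1) ω := by
    intro s c t1 ω hω
    exact le_trans (hGsC s c ω hω.1.1) (urnColors_mono (by omega) ω)
  -- per (s,c) probability lower bound
  have hper : ∀ s c, ENNReal.ofReal (ρ/(1+ρ)^2) * P (Gs s c)
      ≤ ∑' t1 : ℕ, ∑' t2 : ℕ, P (F2 s c t1 t2) := by
    intro s c
    rcases Nat.eq_zero_or_pos c with rfl | hc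
    · have hemp : Gs s 0 = ∅ := by
        refine Set.eq_empty_iff_forall_notMem.2 fun ω hω => ?_
        obtain ⟨⟨_, hζ1⟩, hC⟩ := hω
        have h1 := urnColors_succ (ζ := ζ) (n := s+1) (by omega) ω
        simp only [Nat.add_sub_cancel] at h1
        simp only [Set.mem_preimage, Set.mem_setOf_eq] at hζ1 hC
        omega
      rw [hemp]
      simp
    · have h1 := (h.first_draw hρ hnubar s c hc (hGsMeas s c) (hGsC s c)).1
      have h2 : ∀ t1, ENNReal.ofReal (ρ/(1+ρ)) * P (F1 s c t1)
          ≤ ∑' t2 : ℕ, P (F2 s c t1 t2) := by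
        intro t1
        exact (h.first_draw hρ hnubar (s+1+t1) c hc (hF1Meas s c t1) (hF1C s c t1)).2
      calc ENNReal.ofReal (ρ/(1+ρ)^2) * P (Gs s c)
          = ENNReal.ofReal (ρ/(1+ρ)) * (ENNReal.ofReal (1/(1+ρ)) * P (Gs s c)) := by
            rw [← mul_assoc, ← ENNReal.ofReal_mul (by positivity)]
            congr 2
            rw [div_mul_div_comm, mul_one]
            congr 1
            ring
        _ ≤ ENNReal.ofReal (ρ/(1+ρ)) * ∑' t1 : ℕ, P (F1 s c t1) := mul_le_mul_right h1 _
        _ = ∑' t1 : ℕ, ENNReal.ofReal (ρ/(1+ρ)) * P (F1 s c t1) := ENNReal.tsum_mul_left.symm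
        _ ≤ ∑' t1 : ℕ, ∑' t2 : ℕ, P (F2 s c t1 t2) := ENNReal.tsum_le_tsum h2
  -- union identities
  have hU2 : ∀ s c t1, P (⋃ t2 : ℕ, F2 s c t1 t2) = ∑' t2 : ℕ, P (F2 s c t1 t2) := by
    intro s c t1
    refine measure_iUnion ?_ (hF2Amb s c t1)
    refine pairwise_disjoint_fiber (f := fun ω =>
      sInf {u : ℕ | s+1+t1 < u ∧ (B u ω = 0 ∨ B u ω = c)})
      (g := fun t2 => (s+1+t1)+1+t2) (fun a b hab => by simpa using hab) ?_
    rintro t2 ω ⟨⟨hF1ω, hno⟩, hB0⟩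
    have hmem : (s+1+t1)+1+t2 ∈ {u : ℕ | s+1+t1 < u ∧ (B u ω = 0 ∨ B u ω = c)} :=
      ⟨by omega, Or.inl hB0⟩
    refine le_antisymm (Nat.sInf_le hmem) (le_csInf ⟨_, hmem⟩ ?_)
    intro u hu
    by_contra hcon
    push_neg at hcon
    have hni := hno u hu.1 (by omega)
    rcases hu.2 with h0 | hcc
    · exact hni.1 h0
    · exact hni.2 hcc
  have hU1 : ∀ s c, P (⋃ t1 : ℕ, ⋃ t2 : ℕ, F2 s c t1 t2)
      = ∑' t1 : ℕ, P (⋃ t2 : ℕ, F2 s c t1 t2) := by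
    intro s c
    refine measure_iUnion ?_ (fun t1 => MeasurableSet.iUnion (hF2Amb s c t1))
    refine pairwise_disjoint_fiber (f := fun ω =>
      sInf {u : ℕ | s < u ∧ (B u ω = 0 ∨ B u ω = c)})
      (g := fun t1 => s+1+t1) (fun a b hab => by simpa using hab) ?_
    intro t1 ω hω
    obtain ⟨t2, hω2⟩ := Set.mem_iUnion.1 hω
    obtain ⟨⟨⟨⟨hGsω, hno⟩, hBc⟩, _⟩, _⟩ := hω2
    have hmem : s+1+t1 ∈ {u : ℕ | s < u ∧ (B u ω = 0 ∨ B u ω = c)} :=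
      ⟨by omega, Or.inr hBc⟩
    refine le_antisymm (Nat.sInf_le hmem) (le_csInf ⟨_, hmem⟩ ?_)
    intro u hu
    by_contra hcon
    push_neg at hcon
    have hni := hno u hu.1 (by omega)
    rcases hu.2 with h0 | hcc
    · exact hni.1 h0
    · exact hni.2 hcc
  have hUc : ∀ s, P (⋃ c : ℕ, ⋃ t1 : ℕ, ⋃ t2 : ℕ, F2 s c t1 t2)
      = ∑' c : ℕ, P (⋃ t1 : ℕ, ⋃ t2 : ℕ, F2 s c t1 t2) := by
    intro s
    refine measure_iUnion ?_
      (fun c => MeasurableSet.iUnion fun t1 => MeasurableSet.iUnion (hF2Amb s c t1))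
    refine pairwise_disjoint_fiber (f := fun ω => urnColors ζ (s+1) ω)
      (g := id) (fun a b hab => hab) ?_
    intro c ω hω
    obtain ⟨t1, hω1⟩ := Set.mem_iUnion.1 hω
    obtain ⟨t2, hω2⟩ := Set.mem_iUnion.1 hω1
    exact hω2.1.1.1.1.2
  have hUs : P (⋃ s : ℕ, ⋃ c : ℕ, ⋃ t1 : ℕ, ⋃ t2 : ℕ, F2 s c t1 t2)
      = ∑' s : ℕ, P (⋃ c : ℕ, ⋃ t1 : ℕ, ⋃ t2 : ℕ, F2 s c t1 t2) := by
    refine measure_iUnion ?_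
      (fun s => MeasurableSet.iUnion fun c =>
        MeasurableSet.iUnion fun t1 => MeasurableSet.iUnion (hF2Amb s c t1))
    refine pairwise_disjoint_fiber (f := fun ω => Theta B (z-1) ω)
      (g := id) (fun a b hab => hab) ?_
    intro s ω hω
    obtain ⟨c, hωc⟩ := Set.mem_iUnion.1 hω
    obtain ⟨t1, hω1⟩ := Set.mem_iUnion.1 hωc
    obtain ⟨t2, hω2⟩ := Set.mem_iUnion.1 hω1
    exact hω2.1.1.1.1.1.1.1
  -- inclusion in the target event
  have hsubW : ∀ s c t1 t2, F2 s c t1 t2 ⊆ W := by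
    intro s c t1 t2
    rcases Nat.eq_zero_or_pos c with rfl | hc
    · intro ω hω
      exfalso
      obtain ⟨⟨⟨⟨⟨⟨_, hζ1⟩, hC⟩, _⟩, _⟩, _⟩, _⟩ := hω
      have h1 := urnColors_succ (ζ := ζ) (n := s+1) (by omega) ω
      simp only [Nat.add_sub_cancel] at h1
      simp only [Set.mem_preimage, Set.mem_setOf_eq] at hζ1 hC
      omega
    intro ω hω
    obtain ⟨⟨hF1ω, hno2⟩, hB2⟩ := hω
    obtain ⟨⟨hGsω, hno1⟩, hB1⟩ := hF1ω
    obtain ⟨⟨hTsω, hζ1⟩, hC⟩ := hGsω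
    obtain ⟨hθ, hzc⟩ := hTsω
    simp only [Set.mem_preimage, Set.mem_setOf_eq] at hζ1 hC hB1 hB2 hno1 hno2 hzc
    have hCs : urnColors ζ s ω < c := by
      have h1 := urnColors_succ (ζ := ζ) (n := s+1) (by omega) ω
      simp only [Nat.add_sub_cancel] at h1
      omega
    have hno0 : ∀ i, s < i → i ≤ (s+1+t1)+1+t2-1 → B i ω ≠ 0 := by
      intro i hi1 hi2
      rcases Nat.lt_or_ge i (s+1+t1) with hlt | hge
      · exact (hno1 i hi1 hlt).1
      · rcases Nat.eq_or_lt_of_le hge with heq | hlt2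
        · intro h0
          rw [heq] at hB1
          rw [h0] at hB1
          omega
        · exact (hno2 i hlt2 (by omega)).1
    have hzc2 : zeroCount B ((s+1+t1)+1+t2-1) ω = z - 1 := by
      rw [zeroCount_eq_of_no_zero (by omega) hno0]
      exact hzc
    have hzcu2 : zeroCount B ((s+1+t1)+1+t2) ω = z := by
      have hstep := zeroCount_succ (B := B) ((s+1+t1)+1+t2-1) ω
      have heq : (s+1+t1)+1+t2-1+1 = (s+1+t1)+1+t2 := by omega
      rw [heq] at hstep
      rw [if_pos hB2] at hstep
      omega
    have hzlt : ∀ i, i < (s+1+t1)+1+t2 → zeroCount B i ω < z := by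
      intro i hi
      have := zeroCount_mono (show i ≤ (s+1+t1)+1+t2-1 by omega) (B := B) ω
      omega
    have hθ2 : Theta B z ω = (s+1+t1)+1+t2 := Theta_eq (by omega) (by omega) hzcu2 hzlt
    have hNcol : c ≤ Ncol ζ B z ω := by
      show c ≤ urnColors ζ (Theta B z ω) ω
      rw [hθ2]
      exact le_trans (le_of_eq hC.symm) (urnColors_mono (by omega) ω)
    have hYd : Ydraw ζ B z c ω = 1 := by
      show ((Finset.Icc 1 (Theta B z ω)).filter (fun i => B i ω = c)).card = 1
      rw [hθ2]
      have hfil : (Finset.Icc 1 ((s+1+t1)+1+t2)).filter (fun i => B i ω = c)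
          = {s+1+t1} := by
        ext i
        simp only [Finset.mem_filter, Finset.mem_Icc, Finset.mem_singleton]
        constructor
        · rintro ⟨⟨hi1, hi2⟩, hBi⟩
          by_contra hne
          rcases Nat.lt_or_ge i (s+1) with hlt | hge
          · have hBle := h.B_le i ω hi1
            have hmono := urnColors_mono (show i ≤ s by omega) (ζ := ζ) ω
            omega
          · rcases Nat.lt_or_ge i (s+1+t1) with hlt2 | hge2
            · exact (hno1 i (by omega) (by omega)).2 hBi
            · rcases Nat.lt_or_ge i ((s+1+t1)+1+t2) with hlt3 | hge3
              · exact (hno2 i (by omega) (by omega)).2 hBi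
              · have : i = (s+1+t1)+1+t2 := by omega
                subst this
                rw [hB2] at hBi
                omega
        · intro hi
          subst hi
          exact ⟨⟨by omega, by omega⟩, hB1⟩
      rw [hfil, Finset.card_singleton]
    exact ⟨c, hc, hNcol, hYd⟩
  -- coverage
  have hcov : ∀ s, ∑' c : ℕ, P (Gs s c) = (1 - ν 0) * P (Ts s) := by
    intro s
    have hTZamb : MeasurableSet (Ts s ∩ ζ (s+1) ⁻¹' {x | 1 ≤ x}) :=
      (hTsAmb s).inter (h.measζ (s+1) (by trivial))
    have hpart := measure_partition_urnColors h (s+1) hTZamb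
    have hindep := h.indep_zeta (n := s+1) (by omega) (Tset_meas (z-1) s) {x | 1 ≤ x}
    have hν1 : ν.toMeasure {x : ℕ | 1 ≤ x} = 1 - ν 0 := by
      have hset : {x : ℕ | 1 ≤ x} = ({0} : Set ℕ)ᶜ := by
        ext x
        simp only [Set.mem_setOf_eq, Set.mem_compl_iff, Set.mem_singleton_iff]
        omega
      rw [hset, prob_compl_eq_one_sub (measurableSet_singleton 0),
        PMF.toMeasure_apply_singleton _ _ (measurableSet_singleton 0)]
    calc ∑' c : ℕ, P (Gs s c)
        = P (Ts s ∩ ζ (s+1) ⁻¹' {x | 1 ≤ x}) := hpart.symm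
      _ = (1 - ν 0) * P (Ts s) := by rw [hindep, hν1]
  have hTsum : (1:ℝ≥0∞) ≤ ∑' s : ℕ, P (Ts s) := by
    have hcover : Set.univ ⊆ (⋃ s : ℕ, Ts s)
        ∪ ⋃ u : ℕ, {ω | ∀ t, u < t → B t ω ≠ 0} := by
      intro ω _
      by_cases hg : ∀ u, ∃ t, u < t ∧ B t ω = 0
      · refine Or.inl ?_
        by_cases hz1 : z = 1
        · refine Set.mem_iUnion.2 ⟨0, ?_, ?_⟩
          · rw [hz1]
            exact theta_zero ω
          · rw [hz1, zeroCount_zero]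
        · have hz2 : 2 ≤ z := by omega
          obtain ⟨n, hn⟩ := good_unbounded hg (z-1)
          obtain ⟨m, hmn, hzcm⟩ := zeroCount_hits n (z-1) hn
          have hm1 : 1 ≤ m := by
            rcases Nat.eq_zero_or_pos m with rfl | hm
            · rw [zeroCount_zero] at hzcm
              omega
            · exact hm
          have hne : {n' : ℕ | 1 ≤ n' ∧ zeroCount B n' ω = z-1}.Nonempty := ⟨m, hm1, hzcm⟩
          have hmem := Nat.sInf_mem hne
          refine Set.mem_iUnion.2 ⟨Theta B (z-1) ω, rfl, ?_⟩
          show zeroCount B (Theta B (z-1) ω) ω = z - 1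
          rw [Theta, if_neg (by omega : ¬ z-1 = 0)]
          exact hmem.2
      · push_neg at hg
        obtain ⟨u, hu⟩ := hg
        exact Or.inr (Set.mem_iUnion.2 ⟨u, fun t ht => hu t ht⟩)
    have hA0 : P (⋃ u : ℕ, {ω | ∀ t, u < t → B t ω ≠ 0}) = 0 := by
      refine le_antisymm (le_trans (measure_iUnion_le _) (le_of_eq ?_)) (zero_le)
      rw [tsum_congr (fun u => h.rec_zero hρ hnubar u), tsum_zero]
    have hTdisj : P (⋃ s : ℕ, Ts s) = ∑' s : ℕ, P (Ts s) := by
      refine measure_iUnion ?_ hTsAmb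
      refine pairwise_disjoint_fiber (f := fun ω => Theta B (z-1) ω)
        (g := id) (fun a b hab => hab) ?_
      intro s ω hω
      exact hω.1
    calc (1:ℝ≥0∞) = P Set.univ := measure_univ.symm
      _ ≤ P ((⋃ s : ℕ, Ts s) ∪ ⋃ u : ℕ, {ω | ∀ t, u < t → B t ω ≠ 0}) :=
          measure_mono hcover
      _ ≤ P (⋃ s : ℕ, Ts s) + P (⋃ u : ℕ, {ω | ∀ t, u < t → B t ω ≠ 0}) :=
          measure_union_le _ _
      _ = ∑' s : ℕ, P (Ts s) := by rw [hA0, add_zero, hTdisj]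
  -- final computation
  have ht1 : (ν 0).toReal ≤ 1 := by
    have := ENNReal.toReal_mono (by simp : (1:ℝ≥0∞) ≠ ⊤) hν0.le
    simpa using this
  have hνne : ν 0 ≠ ⊤ := (hν0.trans ENNReal.one_lt_top).ne
  calc ENNReal.ofReal ((1 - (ν 0).toReal) * ρ / (1 + ρ) ^ 2)
      = ENNReal.ofReal ((1 - (ν 0).toReal) * (ρ / (1 + ρ) ^ 2)) := by rw [mul_div_assoc]
    _ = ENNReal.ofReal (1 - (ν 0).toReal) * ENNReal.ofReal (ρ / (1 + ρ) ^ 2) :=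
        ENNReal.ofReal_mul (by linarith)
    _ = (1 - ν 0) * ENNReal.ofReal (ρ / (1 + ρ) ^ 2) := by
        rw [ENNReal.ofReal_sub 1 ENNReal.toReal_nonneg, ENNReal.ofReal_one,
          ENNReal.ofReal_toReal hνne]
    _ = ENNReal.ofReal (ρ / (1 + ρ) ^ 2) * ((1 - ν 0) * 1) := by
        rw [mul_one, mul_comm]
    _ ≤ ENNReal.ofReal (ρ / (1 + ρ) ^ 2) * ((1 - ν 0) * ∑' s : ℕ, P (Ts s)) :=
        mul_le_mul_right (mul_le_mul_right hTsum _) _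
    _ = ∑' s : ℕ, ENNReal.ofReal (ρ / (1 + ρ) ^ 2) * ((1 - ν 0) * P (Ts s)) := by
        simp only [ENNReal.tsum_mul_left]
    _ = ∑' s : ℕ, ENNReal.ofReal (ρ / (1 + ρ) ^ 2) * ∑' c : ℕ, P (Gs s c) := by
        refine tsum_congr fun s => ?_
        rw [hcov s]
    _ = ∑' s : ℕ, ∑' c : ℕ, ENNReal.ofReal (ρ / (1 + ρ) ^ 2) * P (Gs s c) :=
        tsum_congr fun s => ENNReal.tsum_mul_left.symm
    _ ≤ ∑' s : ℕ, ∑' c : ℕ, ∑' t1 : ℕ, ∑' t2 : ℕ, P (F2 s c t1 t2) :=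
        ENNReal.tsum_le_tsum fun s => ENNReal.tsum_le_tsum fun c => hper s c
    _ = ∑' s : ℕ, ∑' c : ℕ, ∑' t1 : ℕ, P (⋃ t2 : ℕ, F2 s c t1 t2) := by
        refine tsum_congr fun s => tsum_congr fun c => tsum_congr fun t1 => (hU2 s c t1).symm
    _ = ∑' s : ℕ, ∑' c : ℕ, P (⋃ t1 : ℕ, ⋃ t2 : ℕ, F2 s c t1 t2) := by
        refine tsum_congr fun s => tsum_congr fun c => (hU1 s c).symm
    _ = ∑' s : ℕ, P (⋃ c : ℕ, ⋃ t1 : ℕ, ⋃ t2 : ℕ, F2 s c t1 t2) :=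
        tsum_congr fun s => (hUc s).symm
    _ = P (⋃ s : ℕ, ⋃ c : ℕ, ⋃ t1 : ℕ, ⋃ t2 : ℕ, F2 s c t1 t2) := hUs.symm
    _ ≤ P W := by
        refine measure_mono ?_
        exact Set.iUnion_subset fun s => Set.iUnion_subset fun c =>
          Set.iUnion_subset fun t1 => Set.iUnion_subset fun t2 => hsubW s c t1 t2

end PartThree


/-- **Proposition (irreducibility of the branching Markov chain `Z` omitting type-0
particles).** The offspring of a particle of type `z` being distributed as the list
`[Y_z^1, …, Y_z^{N_z}]` of the urn: (i) particles of type `0` never reproduce;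
(ii) for any `z ≥ 1` and any types `z₁, …, z_j ≥ 1` there is an `n ≥ 0` such that with
positive probability a particle of type `z` has exactly `j + n` children of respective
types `z₁, …, z_j, 0, …, 0`; (iii) for any `z ≥ 1`, a particle of type `z` has a child
of type `1` with probability at least `(1 - ν(0))·ρ/(1+ρ)² > 0`. -/
theorem bmc_irreducibility
    (ρ : ℝ) (hρ : 0 < ρ) (ν : PMF ℕ) (hν0 : ν 0 < 1) (hnubar : nubar ν < ⊤)
    {Ω : Type*} [MeasurableSpace Ω] (P : Measure Ω)
    (ζ B : ℕ → Ω → ℕ) (h : IsUrn ρ ν P ζ B) :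
    (∀ ω, Ncol ζ B 0 ω = 0) ∧
    (∀ z : ℕ, 1 ≤ z → ∀ j : ℕ, ∀ g : Fin j → ℕ, (∀ i, 1 ≤ g i) →
      ∃ n : ℕ, 0 < P {ω | Ncol ζ B z ω = j + n ∧
        (∀ i : Fin j, Ydraw ζ B z ((i : ℕ) + 1) ω = g i) ∧
        ∀ ℓ : ℕ, j < ℓ → ℓ ≤ j + n → Ydraw ζ B z ℓ ω = 0}) ∧
    (∀ z : ℕ, 1 ≤ z →
      ENNReal.ofReal ((1 - (ν 0).toReal) * ρ / (1 + ρ) ^ 2) ≤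
        P {ω | ∃ ℓ : ℕ, 1 ≤ ℓ ∧ ℓ ≤ Ncol ζ B z ω ∧ Ydraw ζ B z ℓ ω = 1}) ∧
    0 < (1 - (ν 0).toReal) * ρ / (1 + ρ) ^ 2 := by
  haveI := h.prob
  have ht : (ν 0).toReal < 1 := by
    have h1 : (ν 0).toReal < (1 : ℝ≥0∞).toReal :=
      ENNReal.toReal_strict_mono ENNReal.one_ne_top hν0
    simpa using h1
  refine ⟨?_, ?_, ?_, ?_⟩
  · intro ω
    show urnColors ζ (Theta B 0 ω) ω = 0
    rw [theta_zero]
    show ∑ i ∈ Finset.Icc 1 0, ζ i ω = 0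
    rw [Finset.Icc_eq_empty_of_lt (by omega), Finset.sum_empty]
  · intro z hz j g hg
    exact part_two h hρ hν0 z hz j g hg
  · intro z hz
    exact part_three h hρ hν0 hnubar z hz
  · have h1 : (0:ℝ) < 1 - (ν 0).toReal := by linarith
    positivity

end TBRWPaper
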